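/- arXiv:0805.1077 — 2 statements merged into one kernel-verified Lean document; each statement's English description precedes it below -/
import Mathlib

section
/- (Thompson–Freede analogue.) Let A and B be admissible pseudo-Hermitian n×n matrices, and suppose C = A + B is also admissible. Denote by λ_p(·) ≥ … ≥ λ_1(·) > μ_1(·) ≥ … ≥ μ_q(·) the eigenvalues of each of A, B, C. Let 1 ≤ i_1 < i_2 < … < i_m ≤ p and 1 ≤ j_1 < j_2 < … < j_m ≤ p be two m-tuples of integers with i_m + j_m ≤ m + p. Then Σ_{h=1}^m λ_{i_h + j_h − h}(C) ≥ Σ_{h=1}^m λ_{i_h}(A) + Σ_{h=1}^m λ_{j_h}(B). -/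
set_option maxHeartbeats 1000000


open Matrix

/-- The signature matrix `J = diag(1,…,1,−1,…,−1)` with `p` ones and `q` minus-ones. -/
noncomputable def Jmat (p q : ℕ) : Matrix (Fin (p + q)) (Fin (p + q)) ℂ :=
  Matrix.diagonal (fun i => if (i : ℕ) < p then 1 else -1)

/-- The indefinite pairing `⟨z,w⟩ = Σ_{i<p} z_i conj(w_i) − Σ_{i≥p} z_i conj(w_i)`;
equivalently `w† · z` where `x† = (J conj(x))ᵀ`. -/
noncomputable def pairing (p q : ℕ) (z w : Fin (p + q) → ℂ) : ℂ :=
  ∑ i : Fin (p + q),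
    (if (i : ℕ) < p then z i * (starRingEnd ℂ) (w i) else -(z i * (starRingEnd ℂ) (w i)))

/-- The diagonal entries of `Λ = diag(λ_p, …, λ_1, μ_1, …, μ_q)`, where `lam` and `mu`
are 0-indexed: `lam i = λ_{i+1}` and `mu j = μ_{j+1}`. -/
noncomputable def diagEntries (p q : ℕ) (lam : Fin p → ℝ) (mu : Fin q → ℝ) :
    Fin (p + q) → ℂ :=
  fun i =>
    if h : (i : ℕ) < p then ((lam ⟨p - 1 - (i : ℕ), by omega⟩ : ℝ) : ℂ)
    else ((mu ⟨(i : ℕ) - p, by have := i.isLt; omega⟩ : ℝ) : ℂ)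

/-- `A` is an admissible pseudo-Hermitian matrix with (real) eigenvalues
`λ_p ≥ … ≥ λ_1 > μ_1 ≥ … ≥ μ_q`, recorded 0-indexed as `lam i = λ_{i+1}` (so `lam` is
monotone) and `mu j = μ_{j+1}` (so `mu` is antitone), with `λ_1 > μ_1`, and
`A = U Λ U⁻¹` for some invertible `U` with `U J Uᴴ = J`. -/
def IsAdmissible (p q : ℕ) (hp : 0 < p) (hq : 0 < q)
    (A : Matrix (Fin (p + q)) (Fin (p + q)) ℂ)
    (lam : Fin p → ℝ) (mu : Fin q → ℝ) : Prop :=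
  A * Jmat p q = Jmat p q * A.conjTranspose ∧
  Monotone lam ∧ Antitone mu ∧ mu ⟨0, hq⟩ < lam ⟨0, hp⟩ ∧
  ∃ U : Matrix (Fin (p + q)) (Fin (p + q)) ℂ,
    IsUnit U ∧ U * Jmat p q * U.conjTranspose = Jmat p q ∧
    A = U * Matrix.diagonal (diagEntries p q lam mu) * U⁻¹

/-- The Rayleigh ratio `R_A(x) = (x† A x)/(x† x)`, as a real number (for admissible
pseudo-Hermitian `A` both `x† A x` and `x† x` are real). -/
noncomputable def rayleigh (p q : ℕ) (A : Matrix (Fin (p + q)) (Fin (p + q)) ℂ)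
    (x : Fin (p + q) → ℂ) : ℝ :=
  (pairing p q (A.mulVec x) x).re / (pairing p q x x).re

namespace TFwork

variable {p q : ℕ}

/-- pairing is additive in the first argument -/
lemma pairing_add_left (z z' w : Fin (p+q) → ℂ) :
    pairing p q (z + z') w = pairing p q z w + pairing p q z' w := by
  unfold pairing
  rw [← Finset.sum_add_distrib]
  refine Finset.sum_congr rfl fun i _ => ?_
  by_cases h : (i:ℕ) < p <;> simp [h, add_mul] <;> ring

lemma pairing_smul_left (c : ℂ) (z w : Fin (p+q) → ℂ) :
    pairing p q (c • z) w = c * pairing p q z w := by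
  unfold pairing
  rw [Finset.mul_sum]
  refine Finset.sum_congr rfl fun i _ => ?_
  by_cases h : (i:ℕ) < p <;> simp [h] <;> ring

/-- pairing as a linear map in the first argument -/
noncomputable def pairL (w : Fin (p+q) → ℂ) : (Fin (p+q) → ℂ) →ₗ[ℂ] ℂ where
  toFun z := pairing p q z w
  map_add' x y := pairing_add_left x y w
  map_smul' c x := pairing_smul_left c x w

@[simp] lemma pairL_apply (w z : Fin (p+q) → ℂ) : pairL w z = pairing p q z w := rfl

lemma pairing_sum_left {ι : Type*} (s : Finset ι) (f : ι → (Fin (p+q) → ℂ)) (w : Fin (p+q) → ℂ) :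
    pairing p q (∑ t ∈ s, f t) w = ∑ t ∈ s, pairing p q (f t) w := by
  exact map_sum (pairL w) f s

lemma pairing_conj_symm (z w : Fin (p+q) → ℂ) :
    pairing p q z w = (starRingEnd ℂ) (pairing p q w z) := by
  unfold pairing
  rw [map_sum]
  refine Finset.sum_congr rfl fun i _ => ?_
  by_cases h : (i:ℕ) < p <;> simp [h] <;> ring

lemma pairing_eq_dot (z w : Fin (p+q) → ℂ) :
    pairing p q z w = star w ⬝ᵥ ((Jmat p q) *ᵥ z) := by
  unfold pairing Jmat
  unfold dotProduct
  refine Finset.sum_congr rfl fun i _ => ?_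
  rw [mulVec_diagonal]
  by_cases h : (i:ℕ) < p <;> simp [h] <;> ring

lemma Jmat_mul_Jmat : Jmat p q * Jmat p q = 1 := by
  unfold Jmat
  rw [diagonal_mul_diagonal]
  ext i k
  by_cases h : i = k
  · subst h; by_cases hi : (i:ℕ) < p <;> simp [hi]
  · simp [Matrix.diagonal_apply_ne _ h, Matrix.one_apply_ne h]

lemma UtJU {U : Matrix (Fin (p+q)) (Fin (p+q)) ℂ} (hU : IsUnit U)
    (hJ : U * Jmat p q * U.conjTranspose = Jmat p q) :
    U.conjTranspose * Jmat p q * U = Jmat p q := by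
  have hdet : IsUnit U.det := (Matrix.isUnit_iff_isUnit_det U).mp hU
  have h1 : U⁻¹ * U = 1 := Matrix.nonsing_inv_mul U hdet
  have h2 : Jmat p q * U.conjTranspose = U⁻¹ * Jmat p q := by
    calc Jmat p q * U.conjTranspose = (U⁻¹ * U) * (Jmat p q * U.conjTranspose) := by
            rw [h1, Matrix.one_mul]
      _ = U⁻¹ * (U * Jmat p q * U.conjTranspose) := by
            simp only [Matrix.mul_assoc]
      _ = U⁻¹ * Jmat p q := by rw [hJ]
  have h3 : U.conjTranspose = Jmat p q * (U⁻¹ * Jmat p q) := by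
    calc U.conjTranspose = (Jmat p q * Jmat p q) * U.conjTranspose := by
            rw [Jmat_mul_Jmat, Matrix.one_mul]
      _ = Jmat p q * (Jmat p q * U.conjTranspose) := by simp only [Matrix.mul_assoc]
      _ = Jmat p q * (U⁻¹ * Jmat p q) := by rw [h2]
  calc U.conjTranspose * Jmat p q * U
      = Jmat p q * (U⁻¹ * Jmat p q) * Jmat p q * U := by rw [← h3]
    _ = Jmat p q * U⁻¹ * (Jmat p q * Jmat p q) * U := by simp only [Matrix.mul_assoc]
    _ = Jmat p q * U⁻¹ * U := by rw [Jmat_mul_Jmat]; simp only [Matrix.mul_one, Matrix.mul_assoc]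
    _ = Jmat p q * (U⁻¹ * U) := by simp only [Matrix.mul_assoc]
    _ = Jmat p q := by rw [h1, Matrix.mul_one]

lemma pairing_mulVec {U : Matrix (Fin (p+q)) (Fin (p+q)) ℂ}
    (hU' : U.conjTranspose * Jmat p q * U = Jmat p q) (x y : Fin (p+q) → ℂ) :
    pairing p q (U *ᵥ x) (U *ᵥ y) = pairing p q x y := by
  rw [pairing_eq_dot, pairing_eq_dot, Matrix.star_mulVec, Matrix.mulVec_mulVec,
    Matrix.dotProduct_mulVec, Matrix.vecMul_vecMul, ← Matrix.mul_assoc, hU',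
    ← Matrix.dotProduct_mulVec]

section Part2
variable {p q : ℕ}
open Submodule

lemma pairing_diag_re (d v : Fin (p+q) → ℂ) :
    (pairing p q ((Matrix.diagonal d) *ᵥ v) v).re
      = ∑ i : Fin (p+q), (if (i:ℕ) < p then (d i).re * Complex.normSq (v i)
          else -((d i).re * Complex.normSq (v i))) := by
  unfold pairing
  rw [Complex.re_sum]
  refine Finset.sum_congr rfl fun i _ => ?_
  rw [Matrix.mulVec_diagonal]
  by_cases h : (i:ℕ) < p <;>
    simp [h, mul_assoc, Complex.mul_conj, Complex.mul_re]

lemma pairing_self_re (v : Fin (p+q) → ℂ) :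
    (pairing p q v v).re
      = ∑ i : Fin (p+q), (if (i:ℕ) < p then Complex.normSq (v i) else -(Complex.normSq (v i))) := by
  unfold pairing
  rw [Complex.re_sum]
  refine Finset.sum_congr rfl fun i _ => ?_
  by_cases h : (i:ℕ) < p <;> simp [h, Complex.mul_conj]

lemma diag_upper {d v : Fin (p+q) → ℂ} {θ : ℝ}
    (hsupp : ∀ t, v t ≠ 0 → (t:ℕ) < p ∧ (d t).re ≤ θ) :
    (pairing p q ((Matrix.diagonal d) *ᵥ v) v).re ≤ θ * (pairing p q v v).re := by
  rw [pairing_diag_re, pairing_self_re, Finset.mul_sum, ← sub_nonneg, ← Finset.sum_sub_distrib]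
  refine Finset.sum_nonneg fun t _ => ?_
  by_cases hv : v t = 0
  · simp [hv]
  · obtain ⟨h1, h2⟩ := hsupp t hv
    have h3 : 0 ≤ Complex.normSq (v t) := Complex.normSq_nonneg _
    simp only [if_pos h1]
    nlinarith

lemma diag_lower {d v : Fin (p+q) → ℂ} {θ : ℝ}
    (hsupp : ∀ t, v t ≠ 0 → (((t:ℕ) < p → θ ≤ (d t).re) ∧ (p ≤ (t:ℕ) → (d t).re ≤ θ))) :
    θ * (pairing p q v v).re ≤ (pairing p q ((Matrix.diagonal d) *ᵥ v) v).re := by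
  rw [pairing_diag_re, pairing_self_re, Finset.mul_sum, ← sub_nonneg, ← Finset.sum_sub_distrib]
  refine Finset.sum_nonneg fun t _ => ?_
  by_cases hv : v t = 0
  · simp [hv]
  · obtain ⟨h1, h2⟩ := hsupp t hv
    have h3 : 0 ≤ Complex.normSq (v t) := Complex.normSq_nonneg _
    by_cases hc : (t:ℕ) < p
    · simp only [if_pos hc]
      have := h1 hc
      nlinarith
    · simp only [if_neg hc]
      have := h2 (by omega)
      nlinarith

lemma pairing_self_pos {v : Fin (p+q) → ℂ}
    (hsupp : ∀ t, v t ≠ 0 → (t:ℕ) < p) (hv : v ≠ 0) :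
    0 < (pairing p q v v).re := by
  rw [pairing_self_re]
  obtain ⟨t0, ht0⟩ := Function.ne_iff.mp hv
  refine Finset.sum_pos' (fun t _ => ?_) ⟨t0, Finset.mem_univ _, ?_⟩
  · by_cases hv' : v t = 0
    · simp [hv']
    · simp only [if_pos (hsupp t hv')]
      exact Complex.normSq_nonneg _
  · simp only [if_pos (hsupp t0 ht0)]
    exact Complex.normSq_pos.mpr ht0

lemma eigen_mulVec {M U : Matrix (Fin (p+q)) (Fin (p+q)) ℂ} {d : Fin (p+q) → ℂ}
    (h : M * U = U * Matrix.diagonal d) (v : Fin (p+q) → ℂ) :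
    M *ᵥ (U *ᵥ v) = U *ᵥ ((Matrix.diagonal d) *ᵥ v) := by
  rw [Matrix.mulVec_mulVec, h, ← Matrix.mulVec_mulVec]

lemma mulVecLin_ker {U : Matrix (Fin (p+q)) (Fin (p+q)) ℂ} (hU : IsUnit U) :
    LinearMap.ker (Matrix.mulVecLin U) = ⊥ := by
  rw [LinearMap.ker_eq_bot']
  intro x hx
  have h1 : U⁻¹ *ᵥ (U *ᵥ x) = x := by
    rw [Matrix.mulVec_mulVec, Matrix.nonsing_inv_mul _ ((Matrix.isUnit_iff_isUnit_det U).mp hU),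
      Matrix.one_mulVec]
  rw [← h1]
  have hx' : U *ᵥ x = 0 := hx
  rw [hx']
  simp

lemma mulVec_injective {U : Matrix (Fin (p+q)) (Fin (p+q)) ℂ} (hU : IsUnit U) {x y : Fin (p+q) → ℂ}
    (h : U *ᵥ x = U *ᵥ y) : x = y := by
  have := mulVecLin_ker (p := p) (q := q) hU
  rw [LinearMap.ker_eq_bot] at this
  exact this h

lemma single_linearIndependent :
    LinearIndependent ℂ (fun t : Fin (p+q) => (Pi.single t (1:ℂ) : Fin (p+q) → ℂ)) := by
  classical
  rw [Fintype.linearIndependent_iff]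
  intro g hg s
  have := congrFun hg s
  simpa [Finset.sum_apply, Pi.single_apply] using this

lemma fam_linearIndependent {cnt : ℕ} {U : Matrix (Fin (p+q)) (Fin (p+q)) ℂ} (hU : IsUnit U)
    {pos : Fin cnt → Fin (p+q)} (hpos : Function.Injective pos) :
    LinearIndependent ℂ (fun r : Fin cnt => U *ᵥ Pi.single (pos r) (1:ℂ)) := by
  have h1 : LinearIndependent ℂ (fun r : Fin cnt => (Pi.single (pos r) (1:ℂ) : Fin (p+q) → ℂ)) :=
    single_linearIndependent.comp pos hpos
  exact h1.map' (Matrix.mulVecLin U) (mulVecLin_ker hU)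

lemma fam_finrank {cnt : ℕ} {U : Matrix (Fin (p+q)) (Fin (p+q)) ℂ} (hU : IsUnit U)
    {pos : Fin cnt → Fin (p+q)} (hpos : Function.Injective pos) :
    Module.finrank ℂ (Submodule.span ℂ (Set.range fun r => U *ᵥ Pi.single (pos r) (1:ℂ))) = cnt := by
  rw [finrank_span_eq_card (fam_linearIndependent hU hpos)]
  simp

lemma mem_span_mulVec_single {cnt : ℕ} {U : Matrix (Fin (p+q)) (Fin (p+q)) ℂ}
    {pos : Fin cnt → Fin (p+q)} {x : Fin (p+q) → ℂ}
    (hx : x ∈ Submodule.span ℂ (Set.range fun r => U *ᵥ Pi.single (pos r) (1:ℂ))) :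
    ∃ v : Fin (p+q) → ℂ, x = U *ᵥ v ∧ ∀ t, v t ≠ 0 → ∃ r, pos r = t := by
  rw [mem_span_range_iff_exists_fun] at hx
  obtain ⟨c, hc⟩ := hx
  classical
  refine ⟨∑ r, c r • (Pi.single (pos r) 1 : Fin (p+q) → ℂ), ?_, ?_⟩
  · rw [← hc]
    have h0 : U *ᵥ (∑ r, c r • (Pi.single (pos r) 1 : Fin (p+q) → ℂ))
        = Matrix.mulVecLin U (∑ r, c r • (Pi.single (pos r) 1 : Fin (p+q) → ℂ)) := rfl
    rw [h0, map_sum]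
    refine Finset.sum_congr rfl fun r _ => ?_
    rw [LinearMap.map_smul]
    rfl
  · intro t hvt
    by_contra hno
    push_neg at hno
    apply hvt
    simp only [Finset.sum_apply, Pi.smul_apply, Pi.single_apply, smul_eq_mul]
    refine Finset.sum_eq_zero fun r _ => ?_
    rw [if_neg (Ne.symm (hno r)), mul_zero]

end Part2

section Part3
variable {p q : ℕ}
open Submodule Module

lemma pairing_smul_right (c : ℂ) (z w : Fin (p+q) → ℂ) :
    pairing p q z (c • w) = (starRingEnd ℂ) c * pairing p q z w := by
  rw [pairing_conj_symm, pairing_smul_left, RingHom.map_mul, ← pairing_conj_symm]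

lemma pairing_sum_right {ι : Type*} (s : Finset ι) (f : ι → (Fin (p+q) → ℂ)) (z : Fin (p+q) → ℂ) :
    pairing p q z (∑ t ∈ s, f t) = ∑ t ∈ s, pairing p q z (f t) := by
  rw [pairing_conj_symm, pairing_sum_left, map_sum]
  exact Finset.sum_congr rfl fun t _ => (pairing_conj_symm _ _).symm

lemma pairing_self_im (v : Fin (p+q) → ℂ) : (pairing p q v v).im = 0 := by
  have h := pairing_conj_symm v v
  have := congrArg Complex.im h
  simp only [Complex.conj_im] at this
  linarith

section Helpers
variable {V : Type} [AddCommGroup V] [Module ℂ V] [FiniteDimensional ℂ V]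

lemma inf_finrank_lower (S T : Submodule ℂ V) :
    finrank ℂ S + finrank ℂ T ≤ finrank ℂ (S ⊓ T : Submodule ℂ V) + finrank ℂ V := by
  have h := Submodule.finrank_sup_add_finrank_inf_eq S T
  have h2 : finrank ℂ (S ⊔ T : Submodule ℂ V) ≤ finrank ℂ V := Submodule.finrank_le _
  omega

lemma exists_ne_zero_of_finrank {S : Submodule ℂ V} (h : 1 ≤ finrank ℂ S) :
    ∃ x, x ∈ S ∧ x ≠ 0 := by
  have hne : S ≠ ⊥ := by
    intro hbot
    rw [hbot, finrank_bot] at h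
    omega
  exact Submodule.exists_mem_ne_zero_of_ne_bot hne

lemma finrank_map_mkQ (ℓ S : Submodule ℂ V) :
    finrank ℂ (S.map ℓ.mkQ) + finrank ℂ (S ⊓ ℓ : Submodule ℂ V) = finrank ℂ S := by
  have h1 := LinearMap.finrank_range_add_finrank_ker (ℓ.mkQ.domRestrict S)
  rw [LinearMap.range_domRestrict] at h1
  have h2 : LinearMap.ker (ℓ.mkQ.domRestrict S) = Submodule.comap S.subtype ℓ := by
    ext x
    simp [LinearMap.mem_ker, Submodule.Quotient.mk_eq_zero]
  rw [h2] at h1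
  have h3 : finrank ℂ (Submodule.comap S.subtype ℓ) = finrank ℂ (S ⊓ ℓ : Submodule ℂ V) := by
    rw [← Submodule.finrank_map_subtype_eq S (Submodule.comap S.subtype ℓ),
      Submodule.map_comap_subtype]
  omega

lemma inf_line_of_mem {x : V} {S : Submodule ℂ V} (hx : x ∈ S) :
    S ⊓ (ℂ ∙ x) = (ℂ ∙ x) :=
  inf_eq_right.mpr ((Submodule.span_singleton_le_iff_mem x S).mpr hx)

lemma inf_line_of_not_mem {x : V} {S : Submodule ℂ V} (hx : x ∉ S) :
    S ⊓ (ℂ ∙ x) = ⊥ := by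
  rw [eq_bot_iff]
  rintro y hy
  rw [Submodule.mem_inf] at hy
  obtain ⟨hyS, hyl⟩ := hy
  obtain ⟨c, rfl⟩ := Submodule.mem_span_singleton.mp hyl
  rcases eq_or_ne c 0 with hc | hc
  · simp [hc]
  · exfalso
    apply hx
    have : c⁻¹ • (c • x) ∈ S := S.smul_mem _ hyS
    rwa [smul_smul, inv_mul_cancel₀ hc, one_smul] at this

lemma finrank_comap_mkQ (ℓ : Submodule ℂ V) (Z : Submodule ℂ (V ⧸ ℓ)) :
    finrank ℂ (Z.comap ℓ.mkQ) = finrank ℂ Z + finrank ℂ ℓ := by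
  have hmap : (Z.comap ℓ.mkQ).map ℓ.mkQ = Z :=
    Submodule.map_comap_eq_of_surjective ℓ.mkQ_surjective Z
  have hker : ℓ ≤ Z.comap ℓ.mkQ := by
    intro x hx
    simp [Submodule.mem_comap, (Submodule.Quotient.mk_eq_zero ℓ).mpr hx]
  have h1 := finrank_map_mkQ ℓ (Z.comap ℓ.mkQ)
  rw [hmap, inf_eq_right.mpr hker] at h1
  omega

lemma finrank_inf_sup_line (X S T : Submodule ℂ V) (hT : finrank ℂ T ≤ 1) :
    finrank ℂ (X ⊓ (S ⊔ T) : Submodule ℂ V) ≤ finrank ℂ (X ⊓ S : Submodule ℂ V) + 1 := by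
  set Y := X ⊓ (S ⊔ T) with hY
  have h1 : Y ⊓ S = X ⊓ S := by
    apply le_antisymm
    · exact inf_le_inf_right S inf_le_left
    · exact le_inf (le_inf inf_le_left (le_trans inf_le_right le_sup_left)) inf_le_right
  have h2 := Submodule.finrank_sup_add_finrank_inf_eq Y S
  rw [h1] at h2
  have h3 : finrank ℂ (Y ⊔ S : Submodule ℂ V) ≤ finrank ℂ (S ⊔ T : Submodule ℂ V) := by
    apply Submodule.finrank_mono
    exact sup_le (le_trans inf_le_right le_rfl) le_sup_left
  have h4 : finrank ℂ (S ⊔ T : Submodule ℂ V) ≤ finrank ℂ S + 1 := by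
    have h5 := Submodule.finrank_sup_add_finrank_inf_eq S T
    omega
  omega

lemma finrank_inf_ker (φ : V →ₗ[ℂ] ℂ) (S : Submodule ℂ V) :
    finrank ℂ S ≤ finrank ℂ (S ⊓ LinearMap.ker φ : Submodule ℂ V) + 1 := by
  have h1 := LinearMap.finrank_range_add_finrank_ker (φ.domRestrict S)
  have h2 : finrank ℂ (LinearMap.range (φ.domRestrict S)) ≤ 1 := by
    have := Submodule.finrank_le (LinearMap.range (φ.domRestrict S))
    simpa using this
  have h3 : LinearMap.ker (φ.domRestrict S) = Submodule.comap S.subtype (LinearMap.ker φ) := by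
    ext x
    simp
  have h4 : finrank ℂ (Submodule.comap S.subtype (LinearMap.ker φ))
      = finrank ℂ (S ⊓ LinearMap.ker φ : Submodule ℂ V) := by
    rw [← Submodule.finrank_map_subtype_eq S, Submodule.map_comap_subtype]
  rw [h3, h4] at h1
  omega

lemma avoid {ι : Type} [DecidableEq ι] (G : Submodule ℂ V) (hG : G ≠ ⊥) (s : Finset ι)
    (f : ι → Submodule ℂ V) (hf : ∀ i ∈ s, ¬ (G ≤ f i)) :
    ∃ x, x ∈ G ∧ x ≠ 0 ∧ ∀ i ∈ s, x ∉ f i := by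
  classical
  induction s using Finset.induction_on with
  | empty =>
    obtain ⟨x, hx, h0⟩ := Submodule.exists_mem_ne_zero_of_ne_bot hG
    exact ⟨x, hx, h0, by simp⟩
  | insert _ _ hnotmem ih =>
    rename_i a s
    obtain ⟨x, hxG, hx0, hxs⟩ := ih (fun i hi => hf i (Finset.mem_insert_of_mem hi))
    have hfa : ¬ (G ≤ f a) := hf a (Finset.mem_insert_self a s)
    by_cases hxa : x ∉ f a
    · refine ⟨x, hxG, hx0, fun i hi => ?_⟩
      rcases Finset.mem_insert.mp hi with h | h
      · subst h; exact hxa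
      · exact hxs i h
    · push_neg at hxa
      obtain ⟨y, hyG, hy0⟩ : ∃ y, y ∈ G ∧ y ∉ f a := by
        by_contra hcon
        push_neg at hcon
        exact hfa hcon
      have hyne : y ≠ 0 := fun h => hy0 (h ▸ (f a).zero_mem)
      -- each bad set of parameters is subsingleton
      have key : ∀ (W : Submodule ℂ V), (y ∈ W → x ∉ W) →
          Set.Subsingleton {t : ℂ | x + t • y ∈ W} := by
        intro W hW t1 ht1 t2 ht2
        by_contra hne
        have hsub : (t1 - t2) • y ∈ W := by
          have := W.sub_mem ht1 ht2
          simpa [sub_smul] using this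
        have hyW : y ∈ W := by
          have : (t1 - t2)⁻¹ • ((t1 - t2) • y) ∈ W := W.smul_mem _ hsub
          rwa [smul_smul, inv_mul_cancel₀ (sub_ne_zero.mpr hne), one_smul] at this
        have hxW : x ∈ W := by
          have : (x + t1 • y) - t1 • y ∈ W := W.sub_mem ht1 (W.smul_mem _ hyW)
          simpa using this
        exact hW hyW hxW
      set bad : Set ℂ :=
        {t : ℂ | x + t • y = 0} ∪ {t : ℂ | x + t • y ∈ f a} ∪
          ⋃ i ∈ (s : Set ι), {t : ℂ | x + t • y ∈ f i} with hbad
      have hbadfin : bad.Finite := by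
        refine (Set.Finite.union (Set.Finite.union ?_ ?_) ?_)
        · refine Set.Subsingleton.finite ?_
          have := key ⊥ (fun hyb => absurd hyb (by simpa using hyne))
          simpa using this
        · exact Set.Subsingleton.finite (key (f a) (fun hyb => absurd hyb hy0))
        · refine Set.Finite.biUnion s.finite_toSet (fun i hi => ?_)
          refine Set.Subsingleton.finite (key (f i) (fun _ => hxs i hi))
      obtain ⟨t, ht⟩ := (Set.Finite.infinite_compl hbadfin).nonempty
      simp only [Set.mem_compl_iff, hbad, Set.mem_union, Set.mem_setOf_eq, Set.mem_iUnion,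
        exists_prop, not_or, not_exists, not_and] at ht
      obtain ⟨⟨ht0, hta⟩, hts⟩ := ht
      refine ⟨x + t • y, G.add_mem hxG (G.smul_mem _ hyG), ht0, fun i hi => ?_⟩
      rcases Finset.mem_insert.mp hi with h | h
      · subst h; exact hta
      · exact hts i h

end Helpers
end Part3

section Part4
variable {p q : ℕ}
open Submodule Module

lemma gram_schmidt {P : Submodule ℂ (Fin (p+q) → ℂ)}
    (hP : ∀ x ∈ P, x ≠ 0 → 0 < (pairing p q x x).re) :
    ∀ (d : ℕ) (Z : ℕ → Submodule ℂ (Fin (p+q) → ℂ)),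
    (∀ s t, s ≤ t → t < d → Z t ≤ Z s) →
    (∀ t, t < d → Z t ≤ P) →
    (∀ t, t < d → d - t ≤ finrank ℂ (Z t)) →
    ∃ y : ℕ → (Fin (p+q) → ℂ),
      (∀ t, t < d → y t ∈ Z t) ∧
      (∀ s, s < d → ∀ t, t < d → pairing p q (y s) (y t) = if s = t then 1 else 0) := by
  intro d
  induction d with
  | zero => exact fun Z _ _ _ => ⟨fun _ => 0, by omega, by omega⟩
  | succ d ih =>
    intro Z hchain hZP hrk
    have h1 : 1 ≤ finrank ℂ (Z d) := by
      have := hrk d (Nat.lt_succ_self d); omega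
    obtain ⟨v, hv, hv0⟩ := exists_ne_zero_of_finrank h1
    have hvP : v ∈ P := hZP d (Nat.lt_succ_self d) hv
    have hvpos : 0 < (pairing p q v v).re := hP v hvP hv0
    set r : ℝ := (pairing p q v v).re with hr
    have hvv : pairing p q v v = (r : ℂ) := by
      apply Complex.ext
      · simp [hr]
      · simp [pairing_self_im]
    set c : ℝ := (Real.sqrt r)⁻¹ with hc
    set w : Fin (p+q) → ℂ := (c : ℂ) • v with hw
    have hwZ : w ∈ Z d := (Z d).smul_mem _ hv
    have hww : pairing p q w w = 1 := by
      rw [hw, pairing_smul_left, pairing_smul_right, hvv]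
      have hconj : (starRingEnd ℂ) ((c : ℝ) : ℂ) = ((c : ℝ) : ℂ) := Complex.conj_ofReal c
      rw [hconj]
      have hcast : ((c:ℂ) * ((c:ℂ) * (r:ℂ))) = (((c * (c * r) : ℝ)) : ℂ) := by
        push_cast; ring
      have h5 : c * (c * r) = 1 := by
        rw [hc]
        rw [show ((Real.sqrt r)⁻¹ * ((Real.sqrt r)⁻¹ * r)) = r / (Real.sqrt r * Real.sqrt r) by
          ring]
        rw [Real.mul_self_sqrt (le_of_lt hvpos)]
        exact div_self (ne_of_gt hvpos)
      rw [hcast, h5]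
      norm_cast
    -- restricted chain
    set Z' : ℕ → Submodule ℂ (Fin (p+q) → ℂ) := fun t => Z t ⊓ LinearMap.ker (pairL v) with hZ'
    have hZ'le : ∀ t, Z' t ≤ Z t := fun t => inf_le_left
    obtain ⟨y, hyZ, hyo⟩ := ih Z'
      (fun s t hst htd => inf_le_inf (hchain s t hst (Nat.lt_succ_of_lt htd)) le_rfl)
      (fun t htd => le_trans (hZ'le t) (hZP t (Nat.lt_succ_of_lt htd)))
      (fun t htd => by
        have h2 := hrk t (Nat.lt_succ_of_lt htd)
        have h3 := finrank_inf_ker (pairL v) (Z t)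
        have h4 : finrank ℂ (Z t ⊓ LinearMap.ker (pairL v) : Submodule ℂ (Fin (p+q) → ℂ))
            = finrank ℂ (Z' t) := rfl
        omega)
    refine ⟨fun t => if t = d then w else y t, ?_, ?_⟩
    · intro t htd
      rcases Nat.lt_succ_iff_lt_or_eq.mp htd with h | h
      · simp only [if_neg (Nat.ne_of_lt h)]
        exact hZ'le t (hyZ t h)
      · subst h
        simp only [if_pos rfl]
        exact hwZ
    · intro s hs t ht
      show pairing p q (if s = d then w else y s) (if t = d then w else y t)
          = if s = t then 1 else 0
      have horthv : ∀ u, u < d → pairing p q (y u) v = 0 := by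
        intro u hu
        have hmem := (Submodule.mem_inf.mp (hyZ u hu)).2
        simpa using hmem
      have horthw : ∀ u, u < d → pairing p q (y u) w = 0 := by
        intro u hu
        rw [hw, pairing_smul_right, horthv u hu, mul_zero]
      rcases Nat.lt_succ_iff_lt_or_eq.mp hs with hsd | hsd <;>
        rcases Nat.lt_succ_iff_lt_or_eq.mp ht with htd | htd
      · rw [if_neg (by omega : ¬ (s = d)), if_neg (by omega : ¬ (t = d))]
        exact hyo s hsd t htd
      · rw [if_neg (by omega : ¬ (s = d)), if_pos htd, if_neg (by omega : ¬ (s = t))]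
        exact horthw s hsd
      · rw [if_pos hsd, if_neg (by omega : ¬ (t = d)), if_neg (by omega : ¬ (s = t))]
        rw [pairing_conj_symm, horthw t htd, map_zero]
      · rw [if_pos hsd, if_pos htd, if_pos (by omega : s = t)]
        exact hww

lemma orthonormal_linearIndependent {m : ℕ} {y : Fin m → (Fin (p+q) → ℂ)}
    (hyo : ∀ s t, pairing p q (y s) (y t) = if s = t then 1 else 0) :
    LinearIndependent ℂ y := by
  rw [Fintype.linearIndependent_iff]
  intro g hg s
  have h1 : pairing p q (∑ t, g t • y t) (y s) = g s := by
    rw [pairing_sum_left]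
    have hterm : ∀ t, pairing p q (g t • y t) (y s) = g t * (if t = s then 1 else 0) := by
      intro t
      rw [pairing_smul_left, hyo t s]
    rw [Finset.sum_congr rfl (fun t _ => hterm t)]
    simp
  rw [hg] at h1
  rw [← h1]
  simp [pairing]

lemma sum_pairing_invariant {m : ℕ} (M : Matrix (Fin (p+q)) (Fin (p+q)) ℂ)
    (y z : Fin m → (Fin (p+q) → ℂ))
    (hyo : ∀ s t, pairing p q (y s) (y t) = if s = t then 1 else 0)
    (hzo : ∀ s t, pairing p q (z s) (z t) = if s = t then 1 else 0)
    (hzy : ∀ t, z t ∈ Submodule.span ℂ (Set.range y)) :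
    ∑ t, pairing p q (M *ᵥ z t) (z t) = ∑ t, pairing p q (M *ᵥ y t) (y t) := by
  classical
  set T : Matrix (Fin m) (Fin m) ℂ := Matrix.of fun s t => pairing p q (z t) (y s) with hT
  have hexp : ∀ t, z t = ∑ s, T s t • y s := by
    intro t
    obtain ⟨cc, hcc⟩ := (mem_span_range_iff_exists_fun ℂ).mp (hzy t)
    have hcT : ∀ s, T s t = cc s := by
      intro s
      show pairing p q (z t) (y s) = cc s
      rw [← hcc, pairing_sum_left]
      have : ∀ u, pairing p q (cc u • y u) (y s) = cc u * (if u = s then 1 else 0) := by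
        intro u; rw [pairing_smul_left, hyo u s]
      rw [Finset.sum_congr rfl (fun u _ => this u)]
      simp
    rw [← hcc]
    exact Finset.sum_congr rfl fun s _ => by rw [hcT s]
  have hTT : T.conjTranspose * T = 1 := by
    ext h h'
    rw [Matrix.mul_apply]
    simp only [Matrix.conjTranspose_apply]
    show ∑ s, (starRingEnd ℂ) (T s h) * T s h' = (1 : Matrix (Fin m) (Fin m) ℂ) h h'
    have h1 : pairing p q (z h') (z h) = ∑ s, T s h' * (starRingEnd ℂ) (T s h) := by
      conv_lhs => rw [hexp h']
      rw [pairing_sum_left]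
      refine Finset.sum_congr rfl fun s _ => ?_
      rw [pairing_smul_left]
      congr 1
      rw [pairing_conj_symm]
      rfl
    have h2 : ∑ s, (starRingEnd ℂ) (T s h) * T s h' = ∑ s, T s h' * (starRingEnd ℂ) (T s h) :=
      Finset.sum_congr rfl fun s _ => by ring
    rw [h2, ← h1, hzo h' h, Matrix.one_apply]
    by_cases hhh : h = h'
    · subst hhh; simp
    · rw [if_neg hhh, if_neg (Ne.symm hhh)]
  have hTTc : T * T.conjTranspose = 1 := mul_eq_one_comm.mp hTT
  have hMz : ∀ t, M *ᵥ z t = ∑ s, T s t • (M *ᵥ y s) := by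
    intro t
    conv_lhs => rw [hexp t]
    have h0 : M *ᵥ (∑ s, T s t • y s) = M.mulVecLin (∑ s, T s t • y s) := rfl
    rw [h0, map_sum]
    refine Finset.sum_congr rfl fun s _ => ?_
    rw [LinearMap.map_smul]
    rfl
  calc ∑ t, pairing p q (M *ᵥ z t) (z t)
      = ∑ t, ∑ s, ∑ s', (T s t * (starRingEnd ℂ) (T s' t)) * pairing p q (M *ᵥ y s) (y s') := by
        refine Finset.sum_congr rfl fun t _ => ?_
        rw [hMz t, pairing_sum_left]
        refine Finset.sum_congr rfl fun s _ => ?_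
        rw [pairing_smul_left]
        conv_lhs => rw [hexp t, pairing_sum_right]
        rw [Finset.mul_sum]
        refine Finset.sum_congr rfl fun s' _ => ?_
        rw [pairing_smul_right]
        ring
    _ = ∑ s, ∑ s', (∑ t, T s t * (starRingEnd ℂ) (T s' t)) * pairing p q (M *ᵥ y s) (y s') := by
        rw [Finset.sum_comm]
        refine Finset.sum_congr rfl fun s _ => ?_
        rw [Finset.sum_comm]
        refine Finset.sum_congr rfl fun s' _ => ?_
        rw [Finset.sum_mul]
    _ = ∑ s, ∑ s', ((T * T.conjTranspose) s s') * pairing p q (M *ᵥ y s) (y s') := by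
        refine Finset.sum_congr rfl fun s _ => Finset.sum_congr rfl fun s' _ => ?_
        rw [Matrix.mul_apply]
        congr 1
    _ = ∑ s, pairing p q (M *ᵥ y s) (y s) := by
        rw [hTTc]
        refine Finset.sum_congr rfl fun s _ => ?_
        rw [Finset.sum_eq_single s]
        · rw [Matrix.one_apply_eq, one_mul]
        · intro s' _ hs'
          rw [Matrix.one_apply_ne (Ne.symm hs'), zero_mul]
        · intro hs; exact absurd (Finset.mem_univ s) hs

end Part4

section Part5
open Submodule Module

lemma flag_lemma : ∀ (m : ℕ), 1 ≤ m →
    ∀ (V : Type) [AddCommGroup V] [Module ℂ V] [FiniteDimensional ℂ V],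
    ∀ (iseq jseq : ℕ → ℕ) (E A B : ℕ → Submodule ℂ V),
    (∀ g h, g < h → h < m → iseq g < iseq h) →
    (∀ g h, g < h → h < m → jseq g < jseq h) →
    (∀ g h, g ≤ h → h < m → E g ≤ E h) →
    (∀ g h, g ≤ h → h < m → A h ≤ A g) →
    (∀ g h, g ≤ h → h < m → B h ≤ B g) →
    (∀ h, h < m → iseq h + jseq h + 1 ≤ finrank ℂ (E h) + h) →
    (∀ h, h < m → finrank ℂ V ≤ finrank ℂ (A h) + iseq h) →
    (∀ h, h < m → finrank ℂ V ≤ finrank ℂ (B h) + jseq h) →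
    ∃ X : Submodule ℂ V, finrank ℂ X = m ∧
      (∀ h, h < m → h + 1 ≤ finrank ℂ (X ⊓ E h : Submodule ℂ V)) ∧
      (∀ h, h < m → m ≤ finrank ℂ (X ⊓ A h : Submodule ℂ V) + h) ∧
      (∀ h, h < m → m ≤ finrank ℂ (X ⊓ B h : Submodule ℂ V) + h) := by
  intro m
  induction m with
  | zero => omega
  | succ m ih =>
    intro _ V _ _ _ iseq jseq E A B hi hj hE hA hB hdim hcA hcB
    classical
    have hG1 : 1 ≤ finrank ℂ (E 0 ⊓ A 0 ⊓ B 0 : Submodule ℂ V) := by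
      have e1 := inf_finrank_lower (E 0) (A 0)
      have e2 := inf_finrank_lower (E 0 ⊓ A 0) (B 0)
      have e3 := hdim 0 (Nat.succ_pos m)
      have e4 := hcA 0 (Nat.succ_pos m)
      have e5 := hcB 0 (Nat.succ_pos m)
      have e6 : finrank ℂ (E 0 ⊓ A 0 : Submodule ℂ V) ≤ finrank ℂ V :=
        Submodule.finrank_le _
      omega
    by_cases hm0 : m = 0
    · -- base case : one-dimensional solution
      subst hm0
      obtain ⟨x, hxG, hx0⟩ := exists_ne_zero_of_finrank hG1
      have hxE : x ∈ E 0 := (le_trans inf_le_left inf_le_left : E 0 ⊓ A 0 ⊓ B 0 ≤ E 0) hxG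
      have hxA : x ∈ A 0 := (le_trans inf_le_left inf_le_right : E 0 ⊓ A 0 ⊓ B 0 ≤ A 0) hxG
      have hxB : x ∈ B 0 := (inf_le_right : E 0 ⊓ A 0 ⊓ B 0 ≤ B 0) hxG
      have hrank1 : finrank ℂ (ℂ ∙ x : Submodule ℂ V) = 1 := finrank_span_singleton hx0
      refine ⟨ℂ ∙ x, hrank1, ?_, ?_, ?_⟩
      · intro h hh
        have h0 : h = 0 := by omega
        subst h0
        have hle : (ℂ ∙ x) ⊓ E 0 = (ℂ ∙ x) :=
          inf_eq_left.mpr ((Submodule.span_singleton_le_iff_mem x _).mpr hxE)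
        rw [hle, hrank1]
      · intro h hh
        have h0 : h = 0 := by omega
        subst h0
        have hle : (ℂ ∙ x) ⊓ A 0 = (ℂ ∙ x) :=
          inf_eq_left.mpr ((Submodule.span_singleton_le_iff_mem x _).mpr hxA)
        rw [hle, hrank1]
      · intro h hh
        have h0 : h = 0 := by omega
        subst h0
        have hle : (ℂ ∙ x) ⊓ B 0 = (ℂ ∙ x) :=
          inf_eq_left.mpr ((Submodule.span_singleton_le_iff_mem x _).mpr hxB)
        rw [hle, hrank1]
    · -- inductive step
      have hm1 : 1 ≤ m := by omega
      set G : Submodule ℂ V := E 0 ⊓ A 0 ⊓ B 0 with hGdef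
      have hGne : G ≠ ⊥ := by
        intro hbot
        rw [hbot, finrank_bot] at hG1
        omega
      set a := Nat.findGreatest (fun h => G ≤ A h) m with ha_def
      set b := Nat.findGreatest (fun h => G ≤ B h) m with hb_def
      have haP : G ≤ A a :=
        Nat.findGreatest_spec (P := fun h => G ≤ A h) (Nat.zero_le m)
          (le_trans inf_le_left inf_le_right)
      have hbP : G ≤ B b :=
        Nat.findGreatest_spec (P := fun h => G ≤ B h) (Nat.zero_le m) inf_le_right
      have ham : a ≤ m := Nat.findGreatest_le m
      have hbm : b ≤ m := Nat.findGreatest_le m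
      have hamax : ∀ h, a < h → h ≤ m → ¬ (G ≤ A h) := fun h h1 h2 =>
        Nat.findGreatest_is_greatest (P := fun h => G ≤ A h) h1 h2
      have hbmax : ∀ h, b < h → h ≤ m → ¬ (G ≤ B h) := fun h h1 h2 =>
        Nat.findGreatest_is_greatest (P := fun h => G ≤ B h) h1 h2
      -- pick the line
      set sA : Finset ℕ := (Finset.range (m+1)).filter (fun h => a < h) with hsA
      set sB : Finset ℕ := (Finset.range (m+1)).filter (fun h => b < h) with hsB
      set sAB : Finset (ℕ ⊕ ℕ) :=
        sA.map ⟨Sum.inl, Sum.inl_injective⟩ ∪ sB.map ⟨Sum.inr, Sum.inr_injective⟩ with hsAB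
      have hf : ∀ i ∈ sAB, ¬ (G ≤ Sum.elim A B i) := by
        intro i hi
        rw [hsAB, Finset.mem_union] at hi
        rcases hi with hi | hi
        · rw [Finset.mem_map] at hi
          obtain ⟨h, hmem, rfl⟩ := hi
          rw [hsA, Finset.mem_filter, Finset.mem_range] at hmem
          exact hamax h hmem.2 (by omega)
        · rw [Finset.mem_map] at hi
          obtain ⟨h, hmem, rfl⟩ := hi
          rw [hsB, Finset.mem_filter, Finset.mem_range] at hmem
          exact hbmax h hmem.2 (by omega)
      obtain ⟨x, hxG, hx0, hxav⟩ := avoid G hGne sAB (Sum.elim A B) hf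
      have hxE0 : x ∈ E 0 := (le_trans inf_le_left inf_le_left : G ≤ E 0) hxG
      have hxE : ∀ h, h ≤ m → x ∈ E h := fun h hh =>
        hE 0 h (Nat.zero_le h) (by omega) hxE0
      have hxA : ∀ h, h ≤ a → x ∈ A h := fun h hh =>
        hA h a hh (by omega) (haP hxG)
      have hxB : ∀ h, h ≤ b → x ∈ B h := fun h hh =>
        hB h b hh (by omega) (hbP hxG)
      have hxnA : ∀ h, a < h → h ≤ m → x ∉ A h := by
        intro h h1 h2
        have hmem : (Sum.inl h : ℕ ⊕ ℕ) ∈ sAB := by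
          rw [hsAB, Finset.mem_union]
          left
          rw [Finset.mem_map]
          exact ⟨h, by rw [hsA, Finset.mem_filter, Finset.mem_range]; omega, rfl⟩
        exact hxav _ hmem
      have hxnB : ∀ h, b < h → h ≤ m → x ∉ B h := by
        intro h h1 h2
        have hmem : (Sum.inr h : ℕ ⊕ ℕ) ∈ sAB := by
          rw [hsAB, Finset.mem_union]
          right
          rw [Finset.mem_map]
          exact ⟨h, by rw [hsB, Finset.mem_filter, Finset.mem_range]; omega, rfl⟩
        exact hxav _ hmem
      set L : Submodule ℂ V := ℂ ∙ x with hLdef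
      have hLrank : finrank ℂ L = 1 := finrank_span_singleton hx0
      have hLle : ∀ S : Submodule ℂ V, x ∈ S → L ≤ S := fun S hS =>
        (Submodule.span_singleton_le_iff_mem x S).mpr hS
      have hinfmem : ∀ S : Submodule ℂ V, x ∈ S → S ⊓ L = L := by
        intro S hxS
        rw [hLdef]
        exact inf_line_of_mem hxS
      have hinfnot : ∀ S : Submodule ℂ V, x ∉ S → S ⊓ L = ⊥ := by
        intro S hxS
        rw [hLdef]
        exact inf_line_of_not_mem hxS
      have hmap_mem : ∀ S : Submodule ℂ V, x ∈ S →
          finrank ℂ (S.map L.mkQ) + 1 = finrank ℂ S := by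
        intro S hxS
        have h1 := finrank_map_mkQ L S
        rw [hinfmem S hxS, hLrank] at h1
        exact h1
      have hmap_not : ∀ S : Submodule ℂ V, x ∉ S →
          finrank ℂ (S.map L.mkQ) = finrank ℂ S := by
        intro S hxS
        have h1 := finrank_map_mkQ L S
        rw [hinfnot S hxS, finrank_bot] at h1
        omega
      have hNq : finrank ℂ (V ⧸ L) + 1 = finrank ℂ V := by
        have h1 := Submodule.finrank_quotient_add_finrank L
        rw [hLrank] at h1
        omega
      have hiseq1 : ∀ h, 0 < h → h ≤ m → 1 ≤ iseq h := by
        intro h h1 h2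
        have := hi 0 h h1 (by omega)
        omega
      have hjseq1 : ∀ h, 0 < h → h ≤ m → 1 ≤ jseq h := by
        intro h h1 h2
        have := hj 0 h h1 (by omega)
        omega
      obtain ⟨Y, hYrank, hYE, hYA, hYB⟩ :=
        ih hm1 (V ⧸ L)
          (fun h => if h < a then iseq h else iseq (h+1) - 1)
          (fun h => if h < b then jseq h else jseq (h+1) - 1)
          (fun h => (E (h+1)).map L.mkQ)
          (fun h => if h < a then (A h).map L.mkQ else (A (h+1)).map L.mkQ)
          (fun h => if h < b then (B h).map L.mkQ else (B (h+1)).map L.mkQ)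
          (by
            intro g h hgh hhm
            beta_reduce
            have h1 := hi g h hgh (by omega)
            have h2 := hi g (h+1) (by omega) (by omega)
            have h3 := hi h (h+1) (by omega) (by omega)
            have h4 := hi (g+1) (h+1) (by omega) (by omega)
            have h5 := hi 0 (g+1) (by omega) (by omega)
            by_cases hga : g < a <;> by_cases hha : h < a
            · rw [if_pos hga, if_pos hha]; omega
            · rw [if_pos hga, if_neg hha]; omega
            · exact absurd hga (by omega)
            · rw [if_neg hga, if_neg hha]; omega)
          (by
            intro g h hgh hhm
            beta_reduce
            have h1 := hj g h hgh (by omega)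
            have h2 := hj g (h+1) (by omega) (by omega)
            have h3 := hj h (h+1) (by omega) (by omega)
            have h4 := hj (g+1) (h+1) (by omega) (by omega)
            have h5 := hj 0 (g+1) (by omega) (by omega)
            by_cases hgb : g < b <;> by_cases hhb : h < b
            · rw [if_pos hgb, if_pos hhb]; omega
            · rw [if_pos hgb, if_neg hhb]; omega
            · exact absurd hgb (by omega)
            · rw [if_neg hgb, if_neg hhb]; omega)
          (by
            intro g h hgh hhm
            beta_reduce
            exact Submodule.map_mono (hE (g+1) (h+1) (by omega) (by omega)))
          (by
            intro g h hgh hhm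
            beta_reduce
            by_cases hga : g < a <;> by_cases hha : h < a
            · rw [if_pos hga, if_pos hha]
              exact Submodule.map_mono (hA g h hgh (by omega))
            · rw [if_pos hga, if_neg hha]
              exact Submodule.map_mono (hA g (h+1) (by omega) (by omega))
            · exact absurd hga (by omega)
            · rw [if_neg hga, if_neg hha]
              exact Submodule.map_mono (hA (g+1) (h+1) (by omega) (by omega)))
          (by
            intro g h hgh hhm
            beta_reduce
            by_cases hgb : g < b <;> by_cases hhb : h < b
            · rw [if_pos hgb, if_pos hhb]
              exact Submodule.map_mono (hB g h hgh (by omega))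
            · rw [if_pos hgb, if_neg hhb]
              exact Submodule.map_mono (hB g (h+1) (by omega) (by omega))
            · exact absurd hgb (by omega)
            · rw [if_neg hgb, if_neg hhb]
              exact Submodule.map_mono (hB (g+1) (h+1) (by omega) (by omega)))
          (by
            intro h hhm
            beta_reduce
            have hd := hdim (h+1) (by omega)
            have hmapE := hmap_mem (E (h+1)) (hxE (h+1) (by omega))
            have h1 := hi h (h+1) (by omega) (by omega)
            have h2 := hj h (h+1) (by omega) (by omega)
            by_cases hha : h < a <;> by_cases hhb : h < b
            · rw [if_pos hha, if_pos hhb]; omega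
            · rw [if_pos hha, if_neg hhb]; omega
            · rw [if_neg hha, if_pos hhb]; omega
            · rw [if_neg hha, if_neg hhb]; omega)
          (by
            intro h hhm
            beta_reduce
            by_cases hha : h < a
            · rw [if_pos hha, if_pos hha]
              have hmapA := hmap_mem (A h) (hxA h (by omega))
              have h1 := hcA h (by omega)
              omega
            · rw [if_neg hha, if_neg hha]
              have hmapA := hmap_not (A (h+1)) (hxnA (h+1) (by omega) (by omega))
              have h1 := hcA (h+1) (by omega)
              have h2 := hiseq1 (h+1) (by omega) (by omega)
              omega)
          (by
            intro h hhm
            beta_reduce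
            by_cases hhb : h < b
            · rw [if_pos hhb, if_pos hhb]
              have hmapB := hmap_mem (B h) (hxB h (by omega))
              have h1 := hcB h (by omega)
              omega
            · rw [if_neg hhb, if_neg hhb]
              have hmapB := hmap_not (B (h+1)) (hxnB (h+1) (by omega) (by omega))
              have h1 := hcB (h+1) (by omega)
              have h2 := hjseq1 (h+1) (by omega) (by omega)
              omega)
      -- pull back
      have hLX : L ≤ Y.comap L.mkQ := by
        intro v hv
        have : L.mkQ v = 0 := by
          rw [Submodule.mkQ_apply, Submodule.Quotient.mk_eq_zero]
          exact hv
        rw [Submodule.mem_comap, this]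
        exact Y.zero_mem
      refine ⟨Y.comap L.mkQ, ?_, ?_, ?_, ?_⟩
      · rw [finrank_comap_mkQ L Y, hYrank, hLrank]
      · -- E conclusions
        intro h hh
        by_cases hh0 : h = 0
        · subst hh0
          have hle : L ≤ (Y.comap L.mkQ) ⊓ E 0 := le_inf hLX (hLle _ hxE0)
          have := Submodule.finrank_mono hle
          omega
        · obtain ⟨h', rfl⟩ : ∃ h', h = h' + 1 := ⟨h-1, by omega⟩
          have hxEh : x ∈ E (h'+1) := hxE (h'+1) (by omega)
          have hcomapE : ((E (h'+1)).map L.mkQ).comap L.mkQ = E (h'+1) := by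
            rw [Submodule.comap_map_mkQ]
            exact sup_eq_right.mpr (hLle _ hxEh)
          have heq : (Y.comap L.mkQ) ⊓ E (h'+1) = (Y ⊓ (E (h'+1)).map L.mkQ).comap L.mkQ := by
            rw [Submodule.comap_inf, hcomapE]
          rw [heq, finrank_comap_mkQ, hLrank]
          have hY1 := hYE h' (by omega)
          omega
      · -- A conclusions
        intro h hh
        by_cases hxAh : x ∈ A h
        · have hcomapA : ((A h).map L.mkQ).comap L.mkQ = A h := by
            rw [Submodule.comap_map_mkQ]
            exact sup_eq_right.mpr (hLle _ hxAh)
          have heq : (Y.comap L.mkQ) ⊓ A h = (Y ⊓ (A h).map L.mkQ).comap L.mkQ := by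
            rw [Submodule.comap_inf, hcomapA]
          rw [heq, finrank_comap_mkQ, hLrank]
          by_cases hha : h < a
          · have hY1 := hYA h (by omega)
            rw [if_pos hha] at hY1
            omega
          · -- h ≥ a; since x ∈ A h we must have h ≤ a, so h = a
            by_cases hham : h < m
            · have hY1 := hYA h hham
              rw [if_neg hha] at hY1
              have hmono : (A (h+1)).map L.mkQ ≤ (A h).map L.mkQ :=
                Submodule.map_mono (hA h (h+1) (by omega) (by omega))
              have := Submodule.finrank_mono (inf_le_inf_left Y hmono)
              omega
            · -- h = m : trivial since the +1 suffices
              have hhm' : h = m := by omega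
              omega
        · -- x ∉ A h, so a < h
          have hah : a < h := by
            by_contra hle
            exact hxAh (hxA h (by omega))
          obtain ⟨h', rfl⟩ : ∃ h', h = h' + 1 := ⟨h-1, by omega⟩
          have hsub : (Y.comap L.mkQ) ⊓ (A (h'+1) ⊔ L)
              = (Y ⊓ (A (h'+1)).map L.mkQ).comap L.mkQ := by
            rw [Submodule.comap_inf, Submodule.comap_map_mkQ, sup_comm]
          have h1 : finrank ℂ ((Y.comap L.mkQ) ⊓ (A (h'+1) ⊔ L) : Submodule ℂ (V))
              = finrank ℂ (Y ⊓ (A (h'+1)).map L.mkQ : Submodule ℂ (V ⧸ L)) + 1 := by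
            rw [hsub, finrank_comap_mkQ, hLrank]
          have h2 : finrank ℂ ((Y.comap L.mkQ) ⊓ (A (h'+1) ⊔ L) : Submodule ℂ V)
              ≤ finrank ℂ ((Y.comap L.mkQ) ⊓ A (h'+1) : Submodule ℂ V) + 1 :=
            finrank_inf_sup_line _ _ _ (le_of_eq hLrank)
          have hY1 := hYA h' (by omega)
          rw [if_neg (by omega : ¬ (h' < a))] at hY1
          omega
      · -- B conclusions
        intro h hh
        by_cases hxBh : x ∈ B h
        · have hcomapB : ((B h).map L.mkQ).comap L.mkQ = B h := by
            rw [Submodule.comap_map_mkQ]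
            exact sup_eq_right.mpr (hLle _ hxBh)
          have heq : (Y.comap L.mkQ) ⊓ B h = (Y ⊓ (B h).map L.mkQ).comap L.mkQ := by
            rw [Submodule.comap_inf, hcomapB]
          rw [heq, finrank_comap_mkQ, hLrank]
          by_cases hhb : h < b
          · have hY1 := hYB h (by omega)
            rw [if_pos hhb] at hY1
            omega
          · by_cases hhbm : h < m
            · have hY1 := hYB h hhbm
              rw [if_neg hhb] at hY1
              have hmono : (B (h+1)).map L.mkQ ≤ (B h).map L.mkQ :=
                Submodule.map_mono (hB h (h+1) (by omega) (by omega))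
              have := Submodule.finrank_mono (inf_le_inf_left Y hmono)
              omega
            · have hhm' : h = m := by omega
              omega
        · have hbh : b < h := by
            by_contra hle
            exact hxBh (hxB h (by omega))
          obtain ⟨h', rfl⟩ : ∃ h', h = h' + 1 := ⟨h-1, by omega⟩
          have hsub : (Y.comap L.mkQ) ⊓ (B (h'+1) ⊔ L)
              = (Y ⊓ (B (h'+1)).map L.mkQ).comap L.mkQ := by
            rw [Submodule.comap_inf, Submodule.comap_map_mkQ, sup_comm]
          have h1 : finrank ℂ ((Y.comap L.mkQ) ⊓ (B (h'+1) ⊔ L) : Submodule ℂ (V))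
              = finrank ℂ (Y ⊓ (B (h'+1)).map L.mkQ : Submodule ℂ (V ⧸ L)) + 1 := by
            rw [hsub, finrank_comap_mkQ, hLrank]
          have h2 : finrank ℂ ((Y.comap L.mkQ) ⊓ (B (h'+1) ⊔ L) : Submodule ℂ V)
              ≤ finrank ℂ ((Y.comap L.mkQ) ⊓ B (h'+1) : Submodule ℂ V) + 1 :=
            finrank_inf_sup_line _ _ _ (le_of_eq hLrank)
          have hY1 := hYB h' (by omega)
          rw [if_neg (by omega : ¬ (h' < b))] at hY1
          omega

end Part5

section Part6
variable {p q : ℕ}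
open Submodule Module

/-- family spanning the bottom-`k+1` positive eigenspace -/
noncomputable def famE (U : Matrix (Fin (p+q)) (Fin (p+q)) ℂ) (hp : 0 < p) (k : ℕ) :
    Fin (k+1) → (Fin (p+q) → ℂ) :=
  fun r => U *ᵥ Pi.single (⟨p - 1 - (r:ℕ), by omega⟩ : Fin (p+q)) 1

noncomputable def Espan (U : Matrix (Fin (p+q)) (Fin (p+q)) ℂ) (hp : 0 < p) (k : ℕ) :
    Submodule ℂ (Fin (p+q) → ℂ) :=
  Submodule.span ℂ (Set.range (famE U hp k))

noncomputable def posS (p q : ℕ) (iv : ℕ) : Fin (p+q-iv) → Fin (p+q) :=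
  fun r => ⟨if (r:ℕ) < p - iv then (r:ℕ) else (r:ℕ) + iv, by
    have := r.isLt; split_ifs <;> omega⟩

noncomputable def Sspan (U : Matrix (Fin (p+q)) (Fin (p+q)) ℂ) (iv : ℕ) :
    Submodule ℂ (Fin (p+q) → ℂ) :=
  Submodule.span ℂ (Set.range (fun r => U *ᵥ Pi.single (posS p q iv r) 1))

lemma Espan_finrank {U : Matrix (Fin (p+q)) (Fin (p+q)) ℂ} (hU : IsUnit U) (hp : 0 < p)
    {k : ℕ} (hk : k < p) : finrank ℂ (Espan U hp k) = k + 1 := by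
  have hinj : Function.Injective
      (fun r : Fin (k+1) => (⟨p - 1 - (r:ℕ), by omega⟩ : Fin (p+q))) := by
    intro r1 r2 hr
    have h1 := r1.isLt
    have h2 := r2.isLt
    have := congrArg (fun t : Fin (p+q) => (t:ℕ)) hr
    simp only [] at this
    apply Fin.ext
    omega
  exact fam_finrank hU hinj

lemma Espan_mono {U : Matrix (Fin (p+q)) (Fin (p+q)) ℂ} (hp : 0 < p)
    {k k' : ℕ} (hk : k ≤ k') : Espan U hp k ≤ Espan U hp k' := by
  apply Submodule.span_le.mpr
  rintro _ ⟨r, rfl⟩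
  apply Submodule.subset_span
  exact ⟨⟨(r:ℕ), by omega⟩, rfl⟩

lemma Sspan_finrank {U : Matrix (Fin (p+q)) (Fin (p+q)) ℂ} (hU : IsUnit U)
    (iv : ℕ) : finrank ℂ (Sspan U iv) = p + q - iv := by
  have hinj : Function.Injective (posS p q iv) := by
    intro r1 r2 hr
    have h1 := r1.isLt
    have h2 := r2.isLt
    have := congrArg (fun t : Fin (p+q) => (t:ℕ)) hr
    simp only [posS] at this
    apply Fin.ext
    split_ifs at this <;> omega
  exact fam_finrank hU hinj

lemma Sspan_anti {U : Matrix (Fin (p+q)) (Fin (p+q)) ℂ}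
    {iv iv' : ℕ} (h : iv ≤ iv') (h' : iv' ≤ p) : Sspan U iv' ≤ Sspan U iv := by
  apply Submodule.span_le.mpr
  rintro _ ⟨r, rfl⟩
  apply Submodule.subset_span
  have hrlt := r.isLt
  by_cases hc : (r:ℕ) < p - iv'
  · refine ⟨⟨(r:ℕ), by omega⟩, ?_⟩
    show U *ᵥ Pi.single (posS p q iv ⟨(r:ℕ), by omega⟩) 1
        = U *ᵥ Pi.single (posS p q iv' r) 1
    have hab : posS p q iv ⟨(r:ℕ), by omega⟩ = posS p q iv' r := by
      apply Fin.ext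
      simp only [posS]
      split_ifs <;> omega
    rw [hab]
  · refine ⟨⟨(r:ℕ) + iv' - iv, by omega⟩, ?_⟩
    show U *ᵥ Pi.single (posS p q iv ⟨(r:ℕ) + iv' - iv, by omega⟩) 1
        = U *ᵥ Pi.single (posS p q iv' r) 1
    have hab : posS p q iv ⟨(r:ℕ) + iv' - iv, by omega⟩ = posS p q iv' r := by
      apply Fin.ext
      simp only [posS]
      split_ifs <;> omega
    rw [hab]

lemma diagEntries_re_lt {lam : Fin p → ℝ} {mu : Fin q → ℝ} {t : Fin (p+q)}
    (ht : (t:ℕ) < p) :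
    diagEntries p q lam mu t = ((lam ⟨p - 1 - (t:ℕ), by omega⟩ : ℝ) : ℂ) := by
  unfold diagEntries
  rw [dif_pos ht]

lemma diagEntries_re_ge {lam : Fin p → ℝ} {mu : Fin q → ℝ} {t : Fin (p+q)}
    (ht : p ≤ (t:ℕ)) :
    diagEntries p q lam mu t = ((mu ⟨(t:ℕ) - p, by have := t.isLt; omega⟩ : ℝ) : ℂ) := by
  unfold diagEntries
  rw [dif_neg (by omega)]

/-- membership in `Espan` gives a representation supported on high positions below `p` -/
lemma Espan_repr {U : Matrix (Fin (p+q)) (Fin (p+q)) ℂ} (hp : 0 < p) {k : ℕ} (hk : k < p)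
    {x : Fin (p+q) → ℂ} (hx : x ∈ Espan U hp k) :
    ∃ v : Fin (p+q) → ℂ, x = U *ᵥ v ∧
      ∀ t, v t ≠ 0 → (t:ℕ) < p ∧ p - 1 - (t:ℕ) ≤ k := by
  obtain ⟨v, hv, hsupp⟩ := mem_span_mulVec_single hx
  refine ⟨v, hv, fun t hvt => ?_⟩
  obtain ⟨r, hr⟩ := hsupp t hvt
  have hrlt := r.isLt
  have : (t:ℕ) = p - 1 - (r:ℕ) := by rw [← hr]
  constructor <;> omega

lemma Sspan_repr {U : Matrix (Fin (p+q)) (Fin (p+q)) ℂ} {iv : ℕ} (hiv : iv ≤ p)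
    {x : Fin (p+q) → ℂ} (hx : x ∈ Sspan U iv) :
    ∃ v : Fin (p+q) → ℂ, x = U *ᵥ v ∧
      ∀ t, v t ≠ 0 → ((t:ℕ) < p → (t:ℕ) < p - iv) := by
  obtain ⟨v, hv, hsupp⟩ := mem_span_mulVec_single hx
  refine ⟨v, hv, fun t hvt htp => ?_⟩
  obtain ⟨r, hr⟩ := hsupp t hvt
  have hrlt := r.isLt
  have hval : (t:ℕ) = if (r:ℕ) < p - iv then (r:ℕ) else (r:ℕ) + iv := by
    rw [← hr]; rfl
  by_cases hc : (r:ℕ) < p - iv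
  · rw [if_pos hc] at hval; omega
  · rw [if_neg hc] at hval; omega

end Part6

section Part7
variable {p q : ℕ}
open Submodule Module

lemma Espan_pos {U : Matrix (Fin (p+q)) (Fin (p+q)) ℂ}
    (hUJ : U.conjTranspose * Jmat p q * U = Jmat p q) (hp : 0 < p)
    {k : ℕ} (hk : k < p) {x : Fin (p+q) → ℂ} (hx : x ∈ Espan U hp k) (hx0 : x ≠ 0) :
    0 < (pairing p q x x).re := by
  obtain ⟨v, rfl, hsupp⟩ := Espan_repr hp hk hx
  rw [pairing_mulVec hUJ]
  refine pairing_self_pos (fun t hvt => (hsupp t hvt).1) ?_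
  intro hv0
  apply hx0
  rw [hv0, Matrix.mulVec_zero]

lemma rayleigh_upper_E {U M : Matrix (Fin (p+q)) (Fin (p+q)) ℂ}
    (hUJ : U.conjTranspose * Jmat p q * U = Jmat p q)
    {lam : Fin p → ℝ} {mu : Fin q → ℝ}
    (hM : M * U = U * Matrix.diagonal (diagEntries p q lam mu))
    (hlam : Monotone lam) (hp : 0 < p)
    {k : ℕ} (hk : k < p) {x : Fin (p+q) → ℂ} (hx : x ∈ Espan U hp k)
    (hxx : pairing p q x x = 1) :
    (pairing p q (M *ᵥ x) x).re ≤ lam ⟨k, hk⟩ := by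
  obtain ⟨v, rfl, hsupp⟩ := Espan_repr hp hk hx
  rw [pairing_mulVec hUJ] at hxx
  rw [eigen_mulVec hM v, pairing_mulVec hUJ]
  have hcond : ∀ t, v t ≠ 0 → (t:ℕ) < p ∧ (diagEntries p q lam mu t).re ≤ lam ⟨k, hk⟩ := by
    intro t hvt
    obtain ⟨h1, h2⟩ := hsupp t hvt
    refine ⟨h1, ?_⟩
    rw [diagEntries_re_lt h1, Complex.ofReal_re]
    exact hlam (Fin.mk_le_mk.mpr h2)
  have hb := diag_upper hcond
  rw [hxx] at hb
  simpa using hb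

lemma rayleigh_lower_S {U M : Matrix (Fin (p+q)) (Fin (p+q)) ℂ}
    (hUJ : U.conjTranspose * Jmat p q * U = Jmat p q)
    {lam : Fin p → ℝ} {mu : Fin q → ℝ}
    (hM : M * U = U * Matrix.diagonal (diagEntries p q lam mu))
    (hlam : Monotone lam) (hmu : Antitone mu) (hp : 0 < p) (hq : 0 < q)
    (hgap : mu ⟨0, hq⟩ < lam ⟨0, hp⟩)
    {iv : ℕ} (hiv : iv < p) {x : Fin (p+q) → ℂ} (hx : x ∈ Sspan U iv)
    (hxx : pairing p q x x = 1) :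
    lam ⟨iv, hiv⟩ ≤ (pairing p q (M *ᵥ x) x).re := by
  obtain ⟨v, rfl, hsupp⟩ := Sspan_repr (le_of_lt hiv) hx
  rw [pairing_mulVec hUJ] at hxx
  rw [eigen_mulVec hM v, pairing_mulVec hUJ]
  have hcond : ∀ t, v t ≠ 0 →
      (((t:ℕ) < p → lam ⟨iv, hiv⟩ ≤ (diagEntries p q lam mu t).re) ∧
        (p ≤ (t:ℕ) → (diagEntries p q lam mu t).re ≤ lam ⟨iv, hiv⟩)) := by
    intro t hvt
    constructor
    · intro htp
      have hlow := hsupp t hvt htp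
      rw [diagEntries_re_lt htp, Complex.ofReal_re]
      exact hlam (Fin.mk_le_mk.mpr (by omega))
    · intro htp
      rw [diagEntries_re_ge htp, Complex.ofReal_re]
      have h1 : mu ⟨(t:ℕ) - p, by have := t.isLt; omega⟩ ≤ mu ⟨0, hq⟩ :=
        hmu (Fin.mk_le_mk.mpr (Nat.zero_le _))
      have h2 : lam ⟨0, hp⟩ ≤ lam ⟨iv, hiv⟩ := hlam (Fin.mk_le_mk.mpr (Nat.zero_le _))
      linarith
  have hb := diag_lower hcond
  rw [hxx] at hb
  simpa using hb

lemma span_of_orthonormal {m : ℕ} {X : Submodule ℂ (Fin (p+q) → ℂ)}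
    (hXrank : finrank ℂ X = m) {y : Fin m → (Fin (p+q) → ℂ)}
    (hmem : ∀ t, y t ∈ X)
    (hyo : ∀ s t, pairing p q (y s) (y t) = if s = t then 1 else 0) :
    Submodule.span ℂ (Set.range y) = X := by
  have hle : Submodule.span ℂ (Set.range y) ≤ X := by
    rw [Submodule.span_le]
    rintro _ ⟨t, rfl⟩
    exact hmem t
  have hrank : finrank ℂ (Submodule.span ℂ (Set.range y)) = m := by
    rw [finrank_span_eq_card (orthonormal_linearIndependent hyo)]
    simp
  exact Submodule.eq_of_le_of_finrank_le hle (by omega)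

end Part7

end TFwork

open TFwork Submodule Module

/-- Thompson–Freede analogue: if `A`, `B`, `C = A + B` are admissible
and `1 ≤ i_1 < ⋯ < i_m ≤ p`, `1 ≤ j_1 < ⋯ < j_m ≤ p` (encoded 0-indexed by strictly
monotone `i j : Fin m → Fin p`) with `i_m + j_m ≤ m + p` (0-indexed:
`i(m-1) + j(m-1) + 2 ≤ m + p`), then
`Σ_h λ_{i_h + j_h − h}(C) ≥ Σ_h λ_{i_h}(A) + Σ_h λ_{j_h}(B)`.
(The hypothesis `hrange`, that the 0-indexed indices `i_h + j_h − h` lie in range, is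
forced by the other hypotheses.) -/
theorem thompson_freede
    (p q : ℕ) (hp : 0 < p) (hq : 0 < q)
    (A B : Matrix (Fin (p + q)) (Fin (p + q)) ℂ)
    (lamA : Fin p → ℝ) (muA : Fin q → ℝ)
    (lamB : Fin p → ℝ) (muB : Fin q → ℝ)
    (lamC : Fin p → ℝ) (muC : Fin q → ℝ)
    (hA : IsAdmissible p q hp hq A lamA muA)
    (hB : IsAdmissible p q hp hq B lamB muB)
    (hC : IsAdmissible p q hp hq (A + B) lamC muC)
    (m : ℕ) (hm : 0 < m)
    (i j : Fin m → Fin p) (hi : StrictMono i) (hj : StrictMono j)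
    (hlast : (i ⟨m - 1, by omega⟩ : ℕ) + (j ⟨m - 1, by omega⟩ : ℕ) + 2 ≤ m + p)
    (hrange : ∀ h : Fin m, (i h : ℕ) + (j h : ℕ) - (h : ℕ) < p) :
    ∑ h : Fin m, lamA (i h) + ∑ h : Fin m, lamB (j h) ≤
      ∑ h : Fin m, lamC ⟨(i h : ℕ) + (j h : ℕ) - (h : ℕ), hrange h⟩ := by
  classical
  obtain ⟨-, hlamA, hmuA, hgapA, UA, hUAunit, hUAJ, hAeq⟩ := hA
  obtain ⟨-, hlamB, hmuB, hgapB, UB, hUBunit, hUBJ, hBeq⟩ := hB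
  obtain ⟨-, hlamC, hmuC, hgapC, UC, hUCunit, hUCJ, hCeq⟩ := hC
  have hUAJ' := UtJU hUAunit hUAJ
  have hUBJ' := UtJU hUBunit hUBJ
  have hUCJ' := UtJU hUCunit hUCJ
  have hAU : A * UA = UA * Matrix.diagonal (diagEntries p q lamA muA) := by
    rw [hAeq, Matrix.mul_assoc,
      Matrix.nonsing_inv_mul _ ((Matrix.isUnit_iff_isUnit_det _).mp hUAunit), Matrix.mul_one]
  have hBU : B * UB = UB * Matrix.diagonal (diagEntries p q lamB muB) := by
    rw [hBeq, Matrix.mul_assoc,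
      Matrix.nonsing_inv_mul _ ((Matrix.isUnit_iff_isUnit_det _).mp hUBunit), Matrix.mul_one]
  have hCU : (A + B) * UC = UC * Matrix.diagonal (diagEntries p q lamC muC) := by
    rw [hCeq, Matrix.mul_assoc,
      Matrix.nonsing_inv_mul _ ((Matrix.isUnit_iff_isUnit_det _).mp hUCunit), Matrix.mul_one]
  -- numeric sequences
  set iN : ℕ → ℕ := fun t => if ht : t < m then (i ⟨t, ht⟩ : ℕ) else t + p with hiN
  set jN : ℕ → ℕ := fun t => if ht : t < m then (j ⟨t, ht⟩ : ℕ) else t + p with hjN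
  have hiNval : ∀ h : Fin m, iN (h : ℕ) = (i h : ℕ) := by
    intro h
    simp only [hiN]
    rw [dif_pos h.isLt]
  have hjNval : ∀ h : Fin m, jN (h : ℕ) = (j h : ℕ) := by
    intro h
    simp only [hjN]
    rw [dif_pos h.isLt]
  have hiNlt : ∀ t, t < m → iN t < p := by
    intro t ht
    simp only [hiN]
    rw [dif_pos ht]
    exact (i ⟨t, ht⟩).isLt
  have hjNlt : ∀ t, t < m → jN t < p := by
    intro t ht
    simp only [hjN]
    rw [dif_pos ht]
    exact (j ⟨t, ht⟩).isLt
  have hiNmono : StrictMono iN := by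
    intro t1 t2 h12
    simp only [hiN]
    by_cases h1 : t1 < m <;> by_cases h2 : t2 < m
    · rw [dif_pos h1, dif_pos h2]
      exact hi (Fin.mk_lt_mk.mpr h12)
    · rw [dif_pos h1, dif_neg h2]
      have := (i ⟨t1, h1⟩).isLt
      omega
    · omega
    · rw [dif_neg h1, dif_neg h2]
      omega
  have hjNmono : StrictMono jN := by
    intro t1 t2 h12
    simp only [hjN]
    by_cases h1 : t1 < m <;> by_cases h2 : t2 < m
    · rw [dif_pos h1, dif_pos h2]
      exact hj (Fin.mk_lt_mk.mpr h12)
    · rw [dif_pos h1, dif_neg h2]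
      have := (j ⟨t1, h1⟩).isLt
      omega
    · omega
    · rw [dif_neg h1, dif_neg h2]
      omega
  have natgap : ∀ (F : ℕ → ℕ), StrictMono F → ∀ g d, F g + d ≤ F (g + d) := by
    intro F hF g d
    induction d with
    | zero => simp
    | succ d ihd =>
      have h2 : F (g + d) < F (g + d + 1) := hF (by omega)
      have h3 : g + (d + 1) = (g + d) + 1 := by omega
      rw [h3]
      omega
  have hiNgap : ∀ g h, g ≤ h → iN g + (h - g) ≤ iN h := by
    intro g h hgh
    have h1 := natgap iN hiNmono g (h - g)
    rw [show g + (h - g) = h from by omega] at h1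
    exact h1
  have hjNgap : ∀ g h, g ≤ h → jN g + (h - g) ≤ jN h := by
    intro g h hgh
    have h1 := natgap jN hjNmono g (h - g)
    rw [show g + (h - g) = h from by omega] at h1
    exact h1
  have hjNself : ∀ t, t ≤ jN t := by
    intro t
    have := hjNgap 0 t (Nat.zero_le t)
    omega
  have hkNlt : ∀ t, t < m → iN t + jN t - t < p := by
    intro t ht
    have h1 : (i ⟨t, ht⟩ : ℕ) + (j ⟨t, ht⟩ : ℕ) - t < p := hrange ⟨t, ht⟩
    have h2 : iN t = (i ⟨t, ht⟩ : ℕ) := hiNval ⟨t, ht⟩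
    have h3 : jN t = (j ⟨t, ht⟩ : ℕ) := hjNval ⟨t, ht⟩
    omega
  have hNfr : finrank ℂ (Fin (p+q) → ℂ) = p + q := by
    rw [Module.finrank_pi]
    simp
  -- apply the flag lemma
  obtain ⟨X, hXrank, hXE, hXA, hXB⟩ :=
    flag_lemma m hm (Fin (p+q) → ℂ) iN jN
      (fun t => Espan UC hp (iN t + jN t - t))
      (fun t => Sspan UA (iN t))
      (fun t => Sspan UB (jN t))
      (fun g h hgh _ => hiNmono hgh)
      (fun g h hgh _ => hjNmono hgh)
      (by
        intro g h hgh hhm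
        beta_reduce
        apply Espan_mono hp
        have h1 := hiNgap g h hgh
        have h2 := hjNgap g h hgh
        omega)
      (by
        intro g h hgh hhm
        beta_reduce
        exact Sspan_anti (hiNmono.monotone hgh) (le_of_lt (hiNlt h hhm)))
      (by
        intro g h hgh hhm
        beta_reduce
        exact Sspan_anti (hjNmono.monotone hgh) (le_of_lt (hjNlt h hhm)))
      (by
        intro h hhm
        beta_reduce
        rw [Espan_finrank hUCunit hp (hkNlt h hhm)]
        have h1 := hjNself h
        have h2 := hkNlt h hhm
        omega)
      (by
        intro h hhm
        beta_reduce
        rw [hNfr, Sspan_finrank hUAunit (iN h)]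
        have := hiNlt h hhm
        omega)
      (by
        intro h hhm
        beta_reduce
        rw [hNfr, Sspan_finrank hUBunit (jN h)]
        have := hjNlt h hhm
        omega)
  -- X is positive
  have hkm1lt : iN (m-1) + jN (m-1) - (m-1) < p := hkNlt (m-1) (by omega)
  have hXEtop : X ≤ Espan UC hp (iN (m-1) + jN (m-1) - (m-1)) := by
    have h1 := hXE (m-1) (by omega)
    beta_reduce at h1
    have h2 : X ⊓ Espan UC hp (iN (m-1) + jN (m-1) - (m-1)) = X := by
      apply Submodule.eq_of_le_of_finrank_le inf_le_left
      omega
    rw [← h2]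
    exact inf_le_right
  have hPpos : ∀ x ∈ Espan UC hp (iN (m-1) + jN (m-1) - (m-1)), x ≠ 0 →
      0 < (pairing p q x x).re := fun x hx hx0 => Espan_pos hUCJ' hp hkm1lt hx hx0
  -- three adapted orthonormal families
  obtain ⟨w, hwZ, hwo⟩ := gram_schmidt hPpos m
    (fun t => X ⊓ Espan UC hp (iN (m-1-t) + jN (m-1-t) - (m-1-t)))
    (by
      intro s t hst htm
      beta_reduce
      apply inf_le_inf_left
      apply Espan_mono hp
      have h1 := hiNgap (m-1-t) (m-1-s) (by omega)
      have h2 := hjNgap (m-1-t) (m-1-s) (by omega)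
      omega)
    (by
      intro t htm
      beta_reduce
      refine le_trans inf_le_left hXEtop)
    (by
      intro t htm
      beta_reduce
      have h1 := hXE (m-1-t) (by omega)
      beta_reduce at h1
      omega)
  obtain ⟨y, hyZ, hyo⟩ := gram_schmidt hPpos m
    (fun t => X ⊓ Sspan UA (iN t))
    (by
      intro s t hst htm
      beta_reduce
      apply inf_le_inf_left
      exact Sspan_anti (hiNmono.monotone hst) (le_of_lt (hiNlt t htm)))
    (by
      intro t htm
      beta_reduce
      refine le_trans inf_le_left hXEtop)
    (by
      intro t htm
      beta_reduce
      have h1 := hXA t htm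
      beta_reduce at h1
      omega)
  obtain ⟨z, hzZ, hzo⟩ := gram_schmidt hPpos m
    (fun t => X ⊓ Sspan UB (jN t))
    (by
      intro s t hst htm
      beta_reduce
      apply inf_le_inf_left
      exact Sspan_anti (hjNmono.monotone hst) (le_of_lt (hjNlt t htm)))
    (by
      intro t htm
      beta_reduce
      refine le_trans inf_le_left hXEtop)
    (by
      intro t htm
      beta_reduce
      have h1 := hXB t htm
      beta_reduce at h1
      omega)
  -- reindex to Fin m
  set wf : Fin m → (Fin (p+q) → ℂ) := fun h => w (m-1-(h:ℕ)) with hwf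
  set yf : Fin m → (Fin (p+q) → ℂ) := fun h => y (h:ℕ) with hyf
  set zf : Fin m → (Fin (p+q) → ℂ) := fun h => z (h:ℕ) with hzf
  have hwfmem : ∀ h : Fin m, wf h ∈ X ⊓ Espan UC hp (iN (h:ℕ) + jN (h:ℕ) - (h:ℕ)) := by
    intro h
    have h1 := hwZ (m-1-(h:ℕ)) (by omega)
    beta_reduce at h1
    rw [show m-1-(m-1-(h:ℕ)) = (h:ℕ) from by have := h.isLt; omega] at h1
    exact h1
  have hyfmem : ∀ h : Fin m, yf h ∈ X ⊓ Sspan UA (iN (h:ℕ)) := by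
    intro h
    have h1 := hyZ (h:ℕ) h.isLt
    beta_reduce at h1
    exact h1
  have hzfmem : ∀ h : Fin m, zf h ∈ X ⊓ Sspan UB (jN (h:ℕ)) := by
    intro h
    have h1 := hzZ (h:ℕ) h.isLt
    beta_reduce at h1
    exact h1
  have hwforth : ∀ s t : Fin m, pairing p q (wf s) (wf t) = if s = t then 1 else 0 := by
    intro s t
    have h1 := hwo (m-1-(s:ℕ)) (by omega) (m-1-(t:ℕ)) (by omega)
    by_cases hst : s = t
    · subst hst
      rw [if_pos rfl] at h1
      rw [if_pos rfl]
      exact h1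
    · have hne : ¬ (m-1-(s:ℕ) = m-1-(t:ℕ)) := by
        have hs := s.isLt
        have ht := t.isLt
        intro hcon
        apply hst
        apply Fin.ext
        have : (s:ℕ) ≠ (t:ℕ) := fun hc => hst (Fin.ext hc)
        omega
      rw [if_neg hne] at h1
      rw [if_neg hst]
      exact h1
  have hyforth : ∀ s t : Fin m, pairing p q (yf s) (yf t) = if s = t then 1 else 0 := by
    intro s t
    have h1 := hyo (s:ℕ) s.isLt (t:ℕ) t.isLt
    by_cases hst : s = t
    · subst hst
      rw [if_pos rfl] at h1
      rw [if_pos rfl]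
      exact h1
    · rw [if_neg (fun hc => hst (Fin.ext hc))] at h1
      rw [if_neg hst]
      exact h1
  have hzforth : ∀ s t : Fin m, pairing p q (zf s) (zf t) = if s = t then 1 else 0 := by
    intro s t
    have h1 := hzo (s:ℕ) s.isLt (t:ℕ) t.isLt
    by_cases hst : s = t
    · subst hst
      rw [if_pos rfl] at h1
      rw [if_pos rfl]
      exact h1
    · rw [if_neg (fun hc => hst (Fin.ext hc))] at h1
      rw [if_neg hst]
      exact h1
  -- spans
  have hspanY : Submodule.span ℂ (Set.range yf) = X :=
    span_of_orthonormal hXrank (fun t => (Submodule.mem_inf.mp (hyfmem t)).1) hyforth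
  have hspanZ : Submodule.span ℂ (Set.range zf) = X :=
    span_of_orthonormal hXrank (fun t => (Submodule.mem_inf.mp (hzfmem t)).1) hzforth
  have hwspanY : ∀ t, wf t ∈ Submodule.span ℂ (Set.range yf) := by
    intro t
    rw [hspanY]
    exact (Submodule.mem_inf.mp (hwfmem t)).1
  have hwspanZ : ∀ t, wf t ∈ Submodule.span ℂ (Set.range zf) := by
    intro t
    rw [hspanZ]
    exact (Submodule.mem_inf.mp (hwfmem t)).1
  -- invariance of the quadratic sums
  have hIA : ∑ t, pairing p q (A *ᵥ wf t) (wf t) = ∑ t, pairing p q (A *ᵥ yf t) (yf t) :=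
    sum_pairing_invariant A yf wf hyforth hwforth hwspanY
  have hIB : ∑ t, pairing p q (B *ᵥ wf t) (wf t) = ∑ t, pairing p q (B *ᵥ zf t) (zf t) :=
    sum_pairing_invariant B zf wf hzforth hwforth hwspanZ
  -- per-term bounds
  have hwf1 : ∀ h : Fin m, pairing p q (wf h) (wf h) = 1 := by
    intro h
    have := hwforth h h
    rwa [if_pos rfl] at this
  have hyf1 : ∀ h : Fin m, pairing p q (yf h) (yf h) = 1 := by
    intro h
    have := hyforth h h
    rwa [if_pos rfl] at this
  have hzf1 : ∀ h : Fin m, pairing p q (zf h) (zf h) = 1 := by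
    intro h
    have := hzforth h h
    rwa [if_pos rfl] at this
  have hCbound : ∀ h : Fin m, (pairing p q ((A+B) *ᵥ wf h) (wf h)).re
      ≤ lamC ⟨(i h : ℕ) + (j h : ℕ) - (h : ℕ), hrange h⟩ := by
    intro h
    have hklt : iN (h:ℕ) + jN (h:ℕ) - (h:ℕ) < p := hkNlt _ h.isLt
    have hb := rayleigh_upper_E hUCJ' hCU hlamC hp hklt
      ((Submodule.mem_inf.mp (hwfmem h)).2) (hwf1 h)
    have heq : (⟨iN (h:ℕ) + jN (h:ℕ) - (h:ℕ), hklt⟩ : Fin p)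
        = ⟨(i h : ℕ) + (j h : ℕ) - (h : ℕ), hrange h⟩ := by
      apply Fin.ext
      have h2 := hiNval h
      have h3 := hjNval h
      simp only []
      omega
    rwa [heq] at hb
  have hAbound : ∀ h : Fin m, lamA (i h) ≤ (pairing p q (A *ᵥ yf h) (yf h)).re := by
    intro h
    have hilt : iN (h:ℕ) < p := hiNlt _ h.isLt
    have hb := rayleigh_lower_S hUAJ' hAU hlamA hmuA hp hq hgapA hilt
      ((Submodule.mem_inf.mp (hyfmem h)).2) (hyf1 h)
    have heq : (⟨iN (h:ℕ), hilt⟩ : Fin p) = i h := by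
      apply Fin.ext
      have h2 := hiNval h
      simpa using h2
    rwa [heq] at hb
  have hBbound : ∀ h : Fin m, lamB (j h) ≤ (pairing p q (B *ᵥ zf h) (zf h)).re := by
    intro h
    have hjlt : jN (h:ℕ) < p := hjNlt _ h.isLt
    have hb := rayleigh_lower_S hUBJ' hBU hlamB hmuB hp hq hgapB hjlt
      ((Submodule.mem_inf.mp (hzfmem h)).2) (hzf1 h)
    have heq : (⟨jN (h:ℕ), hjlt⟩ : Fin p) = j h := by
      apply Fin.ext
      have h2 := hjNval h
      simpa using h2
    rwa [heq] at hb
  -- final computation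
  calc ∑ h : Fin m, lamA (i h) + ∑ h : Fin m, lamB (j h)
      ≤ (∑ h : Fin m, (pairing p q (A *ᵥ yf h) (yf h)).re)
        + (∑ h : Fin m, (pairing p q (B *ᵥ zf h) (zf h)).re) := by
        apply add_le_add
        · exact Finset.sum_le_sum fun h _ => hAbound h
        · exact Finset.sum_le_sum fun h _ => hBbound h
    _ = (∑ h : Fin m, pairing p q (A *ᵥ yf h) (yf h)).re
        + (∑ h : Fin m, pairing p q (B *ᵥ zf h) (zf h)).re := by
        rw [Complex.re_sum, Complex.re_sum]
    _ = (∑ h : Fin m, pairing p q (A *ᵥ wf h) (wf h)).re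
        + (∑ h : Fin m, pairing p q (B *ᵥ wf h) (wf h)).re := by
        rw [hIA, hIB]
    _ = (∑ h : Fin m, pairing p q ((A+B) *ᵥ wf h) (wf h)).re := by
        rw [← Complex.add_re, ← Finset.sum_add_distrib]
        congr 1
        refine Finset.sum_congr rfl fun h _ => ?_
        rw [Matrix.add_mulVec, pairing_add_left]
    _ = ∑ h : Fin m, (pairing p q ((A+B) *ᵥ wf h) (wf h)).re := by
        rw [Complex.re_sum]
    _ ≤ ∑ h : Fin m, lamC ⟨(i h : ℕ) + (j h : ℕ) - (h : ℕ), hrange h⟩ :=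
        Finset.sum_le_sum fun h _ => hCbound h
end

section
/- (Wielandt minimax analogue for partial sums of eigenvalues.) Let A be an admissible pseudo-Hermitian n×n matrix with eigenvalues λ_p ≥ … ≥ λ_1 > μ_1 ≥ … ≥ μ_q, and fix integers 1 ≤ i_1 < i_2 < … < i_m ≤ p. Then Σ_{j=1}^m λ_{i_j} = min over flags V_{i_1} ⊂ V_{i_2} ⊂ … ⊂ V_{i_m} (with dim V_{i_j} = i_j and V_{i_m}∖{0} ⊆ ℂⁿ₊) of the max over systems x_1, …, x_m subordinate to the flag of Σ_{j=1}^m x_j†·A·x_j; precisely: (i) for every such flag there exists a subordinate system with Σ_{j=1}^m x_j†·A·x_j ≥ Σ_{j=1}^m λ_{i_j}, and (ii) there exists such a flag for which every subordinate system satisfies Σ_{j=1}^m x_j†·A·x_j ≤ Σ_{j=1}^m λ_{i_j}. -/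
open Matrix
open Module Submodule

/-- A flag `V_{i_1} ⊂ V_{i_2} ⊂ ⋯ ⊂ V_{i_m}` of complex subspaces of `ℂⁿ` with
`dim V_{i_j} = i_j` (here `idx : Fin m → Fin p` is 0-indexed, so `i_j = idx j + 1`)
and `V_{i_m} ∖ {0} ⊆ ℂⁿ₊`. -/
def IsFlag (p q m : ℕ) (hm : 0 < m) (idx : Fin m → Fin p)
    (V : Fin m → Submodule ℂ (Fin (p + q) → ℂ)) : Prop :=
  (∀ j k : Fin m, j < k → V j < V k) ∧
  (∀ j, Module.finrank ℂ (V j) = (idx j : ℕ) + 1) ∧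
  (∀ x ∈ V ⟨m - 1, by omega⟩, x ≠ 0 → 0 < (pairing p q x x).re)

/-- A system of vectors `x_1, …, x_m` subordinate to the flag `V`: `x_j ∈ V_{i_j}`
and `⟨x_j, x_k⟩ = δ_{jk}`. -/
def IsSubordinate (p q m : ℕ) (V : Fin m → Submodule ℂ (Fin (p + q) → ℂ))
    (x : Fin m → Fin (p + q) → ℂ) : Prop :=
  (∀ j, x j ∈ V j) ∧ ∀ j k, pairing p q (x j) (x k) = if j = k then 1 else 0


section pairing_basics
variable (p q : ℕ)

lemma pairing_eq_matrix (z w : Fin (p + q) → ℂ) :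
    pairing p q z w = star w ⬝ᵥ ((Jmat p q) *ᵥ z) := by
  unfold pairing Jmat
  rw [dotProduct]
  refine Finset.sum_congr rfl fun i _ => ?_
  rw [mulVec_diagonal]
  simp only [Pi.star_apply, RCLike.star_def]
  split <;> ring

lemma Jmat_mul_Jmat : Jmat p q * Jmat p q = 1 := by
  unfold Jmat
  rw [diagonal_mul_diagonal]
  ext i j
  by_cases h : i = j <;> simp [h, diagonal, Matrix.one_apply]
  split <;> norm_num

lemma pairing_conj (z w : Fin (p + q) → ℂ) :
    (starRingEnd ℂ) (pairing p q z w) = pairing p q w z := by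
  unfold pairing
  rw [map_sum]
  refine Finset.sum_congr rfl fun i _ => ?_
  split <;> simp <;> ring

lemma pairing_add_left (z z' w : Fin (p + q) → ℂ) :
    pairing p q (z + z') w = pairing p q z w + pairing p q z' w := by
  unfold pairing
  rw [← Finset.sum_add_distrib]
  refine Finset.sum_congr rfl fun i _ => ?_
  simp only [Pi.add_apply]
  split <;> ring

lemma pairing_add_right (z w w' : Fin (p + q) → ℂ) :
    pairing p q z (w + w') = pairing p q z w + pairing p q z w' := by
  unfold pairing
  rw [← Finset.sum_add_distrib]
  refine Finset.sum_congr rfl fun i _ => ?_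
  simp only [Pi.add_apply, map_add]
  split <;> ring

lemma pairing_smul_left (c : ℂ) (z w : Fin (p + q) → ℂ) :
    pairing p q (c • z) w = c * pairing p q z w := by
  unfold pairing
  rw [Finset.mul_sum]
  refine Finset.sum_congr rfl fun i _ => ?_
  simp only [Pi.smul_apply, smul_eq_mul]
  split <;> ring

lemma pairing_smul_right (c : ℂ) (z w : Fin (p + q) → ℂ) :
    pairing p q z (c • w) = (starRingEnd ℂ) c * pairing p q z w := by
  unfold pairing
  rw [Finset.mul_sum]
  refine Finset.sum_congr rfl fun i _ => ?_
  simp only [Pi.smul_apply, smul_eq_mul, RingHom.map_mul]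
  split <;> ring

lemma pairing_sum_left {ι : Type*} (s : Finset ι) (f : ι → Fin (p + q) → ℂ) (w : Fin (p + q) → ℂ) :
    pairing p q (∑ i ∈ s, f i) w = ∑ i ∈ s, pairing p q (f i) w := by
  classical
  induction s using Finset.induction with
  | empty => simp [pairing]
  | @insert a s h ih =>
      rw [Finset.sum_insert h, Finset.sum_insert h, pairing_add_left, ih]

lemma pairing_self_real (x : Fin (p + q) → ℂ) :
    pairing p q x x = ((pairing p q x x).re : ℂ) := by
  have h := pairing_conj p q x x
  exact ((Complex.conj_eq_iff_re).mp h).symm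

end pairing_basics

section Upart
variable (p q : ℕ) (U : Matrix (Fin (p+q)) (Fin (p+q)) ℂ)

lemma conjT_J_U (J : Matrix (Fin (p+q)) (Fin (p+q)) ℂ) (hJ : J * J = 1)
    (hU : IsUnit U) (h : U * J * U.conjTranspose = J) :
    U.conjTranspose * J * U = J := by
  have hUdet : IsUnit U.det := (Matrix.isUnit_iff_isUnit_det U).mp hU
  have h1 : U⁻¹ * U = 1 := Matrix.nonsing_inv_mul U hUdet
  have h2 : J * U.conjTranspose = U⁻¹ * J := by
    calc J * U.conjTranspose = (U⁻¹ * U) * (J * U.conjTranspose) := by rw [h1, Matrix.one_mul]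
    _ = U⁻¹ * (U * J * U.conjTranspose) := by noncomm_ring
    _ = U⁻¹ * J := by rw [h]
  have h3 : U.conjTranspose = J * (U⁻¹ * J) := by
    calc U.conjTranspose = (J * J) * U.conjTranspose := by rw [hJ, Matrix.one_mul]
    _ = J * (J * U.conjTranspose) := by rw [Matrix.mul_assoc]
    _ = J * (U⁻¹ * J) := by rw [h2]
  calc U.conjTranspose * J * U = J * U⁻¹ * (J * J) * U := by rw [h3]; noncomm_ring
  _ = J * (U⁻¹ * U) := by rw [hJ]; noncomm_ring
  _ = J := by rw [h1, Matrix.mul_one]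

lemma pairing_U_invariant (hJ : U.conjTranspose * Jmat p q * U = Jmat p q)
    (z w : Fin (p + q) → ℂ) :
    pairing p q (U *ᵥ z) (U *ᵥ w) = pairing p q z w := by
  rw [pairing_eq_matrix, pairing_eq_matrix]
  rw [star_mulVec, Matrix.mulVec_mulVec]
  rw [← dotProduct_mulVec, Matrix.mulVec_mulVec, ← Matrix.mul_assoc, hJ]
end Upart

section plumb
set_option linter.unusedSectionVars false
variable {H : Type} [AddCommGroup H] [Module ℂ H] [FiniteDimensional ℂ H]

lemma finrank_map_mkQ_add (L X : Submodule ℂ H) :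
    finrank ℂ (X.map L.mkQ) + finrank ℂ ↥(X ⊓ L) = finrank ℂ X := by
  have f := L.mkQ.comp X.subtype
  have hrange : LinearMap.range (L.mkQ.comp X.subtype) = X.map L.mkQ := by
    rw [LinearMap.range_comp, Submodule.range_subtype]
  have hker : LinearMap.ker (L.mkQ.comp X.subtype) = Submodule.comap X.subtype (X ⊓ L) := by
    rw [LinearMap.ker_comp, Submodule.ker_mkQ]
    ext x
    simp [x.2]
  have h1 := LinearMap.finrank_range_add_finrank_ker (L.mkQ.comp X.subtype)
  rw [hrange, hker] at h1
  rw [← h1]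
  congr 1
  exact (LinearEquiv.finrank_eq (Submodule.comapSubtypeEquivOfLe inf_le_left)).symm

lemma finrank_map_mkQ_of_mem (L X : Submodule ℂ H) {y : H} (hy : y ∈ X) (hy0 : y ≠ 0)
    (hL : L = Submodule.span ℂ {y}) :
    finrank ℂ (X.map L.mkQ) + 1 = finrank ℂ X := by
  subst hL
  have h := finrank_map_mkQ_add (Submodule.span ℂ {y}) X
  have hXL : X ⊓ Submodule.span ℂ {y} = Submodule.span ℂ {y} :=
    inf_eq_right.mpr (Submodule.span_le.mpr (by simpa using hy))
  rw [hXL, finrank_span_singleton hy0] at h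
  exact h

lemma finrank_map_mkQ_of_not_mem (L X : Submodule ℂ H) {y : H} (hy : y ∉ X)
    (hL : L = Submodule.span ℂ {y}) :
    finrank ℂ (X.map L.mkQ) = finrank ℂ X := by
  subst hL
  have h := finrank_map_mkQ_add (Submodule.span ℂ {y}) X
  have hXL : X ⊓ Submodule.span ℂ {y} = ⊥ := by
    ext v
    simp only [Submodule.mem_inf, Submodule.mem_span_singleton, Submodule.mem_bot]
    constructor
    · rintro ⟨hvX, c, rfl⟩
      rcases eq_or_ne c 0 with rfl | hc
      · simp
      · exact absurd ((Submodule.smul_mem_iff X hc).mp hvX) hy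
    · rintro rfl; simp
  rw [hXL] at h
  simpa using h

lemma map_mkQ_comap_inf (L X : Submodule ℂ H) (Sb : Submodule ℂ (H ⧸ L)) :
    (Submodule.comap L.mkQ Sb ⊓ X).map L.mkQ = Sb ⊓ X.map L.mkQ := by
  ext v
  constructor
  · rintro ⟨x, ⟨hxS, hxX⟩, rfl⟩
    exact ⟨hxS, ⟨x, hxX, rfl⟩⟩
  · rintro ⟨hvS, x, hxX, rfl⟩
    exact ⟨x, ⟨hvS, hxX⟩, rfl⟩

lemma finrank_comap_mkQ (L : Submodule ℂ H) (Sb : Submodule ℂ (H ⧸ L)) :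
    finrank ℂ (Submodule.comap L.mkQ Sb) = finrank ℂ Sb + finrank ℂ L := by
  have h := finrank_map_mkQ_add L (Submodule.comap L.mkQ Sb)
  have h2 : (Submodule.comap L.mkQ Sb).map L.mkQ = Sb :=
    Submodule.map_comap_eq_of_surjective (Submodule.mkQ_surjective L) Sb
  have h3 : Submodule.comap L.mkQ Sb ⊓ L = L := by
    refine inf_eq_right.mpr fun x hx => ?_
    simp only [Submodule.mem_comap, Submodule.mkQ_apply]
    rw [(Submodule.Quotient.mk_eq_zero L).mpr hx]
    exact Sb.zero_mem
  rw [h2, h3] at h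
  omega

end plumb

/-- Elementary Schubert-duality intersection lemma. -/
lemma schubert_lemma : ∀ (m : ℕ) (H : Type) [AddCommGroup H] [Module ℂ H]
    [FiniteDimensional ℂ H] (V W : Fin m → Submodule ℂ H), Monotone V → Antitone W →
    (∀ j k : Fin m, j ≤ k →
      finrank ℂ H + 1 + (k : ℕ) ≤ finrank ℂ (V k) + finrank ℂ (W j) + (j : ℕ)) →
    ∃ S : Submodule ℂ H, finrank ℂ S = m ∧
      (∀ k : Fin m, (k : ℕ) + 1 ≤ finrank ℂ ↥(S ⊓ V k)) ∧
      (∀ k : Fin m, m ≤ finrank ℂ ↥(S ⊓ W k) + (k : ℕ)) := by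
  intro m
  induction m with
  | zero =>
      intro H _ _ _ V W _ _ _
      exact ⟨⊥, by simp, fun k => k.elim0, fun k => k.elim0⟩
  | succ m ih =>
      intro H _ _ _ V W hV hW hdim
      classical
      have hnontriv : V 0 ⊓ W 0 ≠ ⊥ := by
        have h1 := hdim 0 0 le_rfl
        have h2 := Submodule.finrank_sup_add_finrank_inf_eq (V 0) (W 0)
        have h3 : finrank ℂ ↥(V 0 ⊔ W 0) ≤ finrank ℂ H := Submodule.finrank_le _
        have h4 : 1 ≤ finrank ℂ ↥(V 0 ⊓ W 0) := by omega
        intro hbot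
        rw [hbot] at h4
        simp at h4
      have hTne : (Finset.univ.filter (fun j : Fin (m+1) => V 0 ⊓ W j ≠ ⊥)).Nonempty :=
        ⟨0, by simp [hnontriv]⟩
      set T := Finset.univ.filter (fun j : Fin (m+1) => V 0 ⊓ W j ≠ ⊥) with hT
      set t := T.max' hTne with ht
      have htmem : V 0 ⊓ W t ≠ ⊥ := by
        have h := T.max'_mem hTne
        exact (Finset.mem_filter.mp h).2
      have htmax : ∀ j : Fin (m+1), V 0 ⊓ W j ≠ ⊥ → (j : ℕ) ≤ (t : ℕ) := by
        intro j hj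
        exact T.le_max' j (by simp [hT, hj])
      obtain ⟨y, hy, hy0⟩ := Submodule.exists_mem_ne_zero_of_ne_bot htmem
      have hyV0 : y ∈ V 0 := hy.1
      have hyWt : y ∈ W t := hy.2
      set L : Submodule ℂ H := Submodule.span ℂ {y} with hL
      have hfinL : finrank ℂ L = 1 := finrank_span_singleton hy0
      have hfinQ : finrank ℂ (H ⧸ L) + 1 = finrank ℂ H := by
        have := Submodule.finrank_quotient_add_finrank L
        omega
      set g : Fin m → Fin (m+1) := fun k =>
        if (k : ℕ) < (t : ℕ) then k.castSucc else k.succ with hg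
      have hgval : ∀ k : Fin m, ((g k : Fin (m+1)) : ℕ)
          = if (k : ℕ) < (t : ℕ) then (k : ℕ) else (k : ℕ) + 1 := by
        intro k
        by_cases hkt : (k : ℕ) < (t : ℕ) <;> simp [hg, hkt]
      set Vq : Fin m → Submodule ℂ (H ⧸ L) := fun k => (V k.succ).map L.mkQ with hVq
      set Wq : Fin m → Submodule ℂ (H ⧸ L) := fun k => (W (g k)).map L.mkQ with hWq
      have hVqk : ∀ k, Vq k = (V k.succ).map L.mkQ := fun _ => rfl
      have hWqk : ∀ k, Wq k = (W (g k)).map L.mkQ := fun _ => rfl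
      have hgmono : Monotone g := by
        intro a b hab
        rw [Fin.le_def] at hab ⊢
        rw [hgval, hgval]
        split <;> split <;> omega
      have hVqmono : Monotone Vq := by
        intro a b hab
        rw [hVqk, hVqk]
        refine Submodule.map_mono (hV ?_)
        rw [Fin.le_def] at hab ⊢
        simp only [Fin.val_succ]
        omega
      have hWqanti : Antitone Wq := fun a b hab => Submodule.map_mono (hW (hgmono hab))
      have hyV : ∀ k : Fin m, y ∈ V k.succ := fun k => hV (Fin.zero_le _) hyV0
      have hyW : ∀ j : Fin (m+1), (j : ℕ) ≤ (t : ℕ) → y ∈ W j := fun j hj => hW hj hyWt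
      have hyWn : ∀ j : Fin (m+1), (t : ℕ) < (j : ℕ) → y ∉ W j := by
        intro j hj hyj
        have hne : V 0 ⊓ W j ≠ ⊥ := by
          intro hbot
          have : y ∈ (⊥ : Submodule ℂ H) := hbot ▸ (Submodule.mem_inf.mpr ⟨hyV0, hyj⟩)
          exact hy0 (by simpa using this)
        have := htmax j hne
        omega
      have hdim' : ∀ j k : Fin m, j ≤ k →
          finrank ℂ (H ⧸ L) + 1 + (k : ℕ) ≤ finrank ℂ (Vq k) + finrank ℂ (Wq j) + (j : ℕ) := by
        intro j k hjk
        rw [Fin.le_def] at hjk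
        have hVk : finrank ℂ (Vq k) + 1 = finrank ℂ (V k.succ) := by
          rw [hVqk]; exact finrank_map_mkQ_of_mem L _ (hyV k) hy0 hL
        by_cases hjt : (j : ℕ) < (t : ℕ)
        · have hyWgj : y ∈ W (g j) := by
            refine hyW _ ?_
            rw [hgval, if_pos hjt]
            omega
          have hWj : finrank ℂ (Wq j) + 1 = finrank ℂ (W (g j)) := by
            rw [hWqk]; exact finrank_map_mkQ_of_mem L _ hyWgj hy0 hL
          have h := hdim (g j) k.succ (by rw [Fin.le_def, hgval, if_pos hjt]; simp only [Fin.val_succ]; omega)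
          rw [hgval, if_pos hjt] at h
          simp only [Fin.val_succ] at h
          omega
        · have hgjv : ((g j : Fin (m+1)) : ℕ) = (j : ℕ) + 1 := by rw [hgval, if_neg hjt]
          have hWj : finrank ℂ (Wq j) = finrank ℂ (W (g j)) := by
            rw [hWqk]
            exact finrank_map_mkQ_of_not_mem L _ (hyWn _ (by omega)) hL
          have h := hdim (g j) k.succ (by rw [Fin.le_def, hgjv]; simp only [Fin.val_succ]; omega)
          rw [hgjv] at h
          simp only [Fin.val_succ] at h
          omega
      obtain ⟨Sb, hSbrank, hSbV, hSbW⟩ := ih (H ⧸ L) Vq Wq hVqmono hWqanti hdim'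
      set S := Submodule.comap L.mkQ Sb with hS
      have hyS : y ∈ S := by
        rw [hS]
        simp only [Submodule.mem_comap, Submodule.mkQ_apply]
        rw [(Submodule.Quotient.mk_eq_zero L).mpr (by rw [hL]; exact Submodule.mem_span_singleton_self y)]
        exact Sb.zero_mem
      refine ⟨S, ?_, ?_, ?_⟩
      · rw [hS, finrank_comap_mkQ, hSbrank, hfinL]
      · -- V side
        intro k
        induction k using Fin.cases with
        | zero =>
            have hle : Submodule.span ℂ {y} ≤ S ⊓ V 0 :=
              Submodule.span_le.mpr (by simp [Set.singleton_subset_iff, hyS, hyV0])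
            have h1 := Submodule.finrank_mono hle
            rw [finrank_span_singleton hy0] at h1
            simpa using h1
        | succ k =>
            have hyk : y ∈ S ⊓ V k.succ := Submodule.mem_inf.mpr ⟨hyS, hyV k⟩
            have heq : finrank ℂ ↥((S ⊓ V k.succ).map L.mkQ) + 1 = finrank ℂ ↥(S ⊓ V k.succ) :=
              finrank_map_mkQ_of_mem L _ hyk hy0 hL
            rw [hS, map_mkQ_comap_inf, ← hVqk, ← hS] at heq
            have h2 := hSbV k
            simp only [Fin.val_succ]
            omega
      · -- W side
        intro k
        rcases lt_trichotomy (k : ℕ) (t : ℕ) with hkt | hkt | hkt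
        · have hkm : (k : ℕ) < m := by have := t.isLt; omega
          set j : Fin m := ⟨(k : ℕ), hkm⟩ with hj
          have hjval : (j : ℕ) = (k : ℕ) := rfl
          have hgj : g j = k := by
            refine Fin.ext ?_
            rw [hgval, hjval, if_pos hkt]
          have hyk : y ∈ S ⊓ W k :=
            Submodule.mem_inf.mpr ⟨hyS, hyW k (le_of_lt hkt)⟩
          have heq : finrank ℂ ↥((S ⊓ W k).map L.mkQ) + 1 = finrank ℂ ↥(S ⊓ W k) :=
            finrank_map_mkQ_of_mem L _ hyk hy0 hL
          rw [hS, map_mkQ_comap_inf, ← hS] at heq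
          have hWj : Wq j = (W k).map L.mkQ := by rw [hWqk, hgj]
          have h2 := hSbW j
          rw [hWj, hjval] at h2
          omega
        · have hyk : y ∈ S ⊓ W k := Submodule.mem_inf.mpr ⟨hyS, hyW k (le_of_eq hkt)⟩
          have heq : finrank ℂ ↥((S ⊓ W k).map L.mkQ) + 1 = finrank ℂ ↥(S ⊓ W k) :=
            finrank_map_mkQ_of_mem L _ hyk hy0 hL
          rw [hS, map_mkQ_comap_inf, ← hS] at heq
          by_cases hkm : (k : ℕ) < m
          · set j : Fin m := ⟨(k : ℕ), hkm⟩ with hj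
            have hjval : (j : ℕ) = (k : ℕ) := rfl
            have hle : Wq j ≤ (W k).map L.mkQ := by
              rw [hWqk]
              refine Submodule.map_mono (hW ?_)
              rw [Fin.le_def, hgval]
              split <;> omega
            have hmono := Submodule.finrank_mono (inf_le_inf_left Sb hle)
            have h2 := hSbW j
            rw [hjval] at h2
            omega
          · have hle : Submodule.span ℂ {y} ≤ S ⊓ W k :=
              Submodule.span_le.mpr (by simpa [Set.singleton_subset_iff] using hyk)
            have h1 := Submodule.finrank_mono hle
            rw [finrank_span_singleton hy0] at h1
            have := k.isLt
            omega
        · have hkm : (k : ℕ) - 1 < m := by have := k.isLt; omega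
          set j : Fin m := ⟨(k : ℕ) - 1, hkm⟩ with hj
          have hjval : (j : ℕ) = (k : ℕ) - 1 := rfl
          have hgj : g j = k := by
            refine Fin.ext ?_
            rw [hgval, hjval, if_neg (by omega)]
            omega
          have hynk : y ∉ S ⊓ W k := fun h => (hyWn k hkt) (Submodule.mem_inf.mp h).2
          have heq : finrank ℂ ↥((S ⊓ W k).map L.mkQ) = finrank ℂ ↥(S ⊓ W k) :=
            finrank_map_mkQ_of_not_mem L _ hynk hL
          rw [hS, map_mkQ_comap_inf, ← hS] at heq
          have hWj : Wq j = (W k).map L.mkQ := by rw [hWqk, hgj]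
          have h2 := hSbW j
          rw [hWj, hjval] at h2
          omega

noncomputable def pairingL (p q : ℕ) (w : Fin (p + q) → ℂ) :
    (Fin (p + q) → ℂ) →ₗ[ℂ] ℂ where
  toFun z := pairing p q z w
  map_add' z z' := pairing_add_left p q z z' w
  map_smul' c z := pairing_smul_left p q c z w

lemma gram_schmidt (p q : ℕ) : ∀ (m : ℕ) (C : Fin m → Submodule ℂ (Fin (p+q) → ℂ)),
    Monotone C → (∀ k : Fin m, (k : ℕ) + 1 ≤ finrank ℂ (C k)) →
    (∀ (k : Fin m) (x : Fin (p+q) → ℂ), x ∈ C k → x ≠ 0 → 0 < (pairing p q x x).re) →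
    ∃ x : Fin m → (Fin (p+q) → ℂ), (∀ k, x k ∈ C k) ∧
      (∀ j k, pairing p q (x j) (x k) = if j = k then 1 else 0) := by
  intro m
  induction m with
  | zero => exact fun C _ _ _ => ⟨fun _ => 0, fun k => k.elim0, fun j => j.elim0⟩
  | succ m ih =>
      intro C hmono hrank hpos
      obtain ⟨x', hx'mem, hx'orth⟩ := ih (fun k => C k.castSucc)
        (fun a b hab => hmono (by rw [Fin.le_def] at hab ⊢; simpa using hab))
        (fun k => by simpa using hrank k.castSucc)
        (fun k => hpos k.castSucc)
      -- find the new vector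
      set Cl := C (Fin.last m) with hCl
      set F : Cl →ₗ[ℂ] (Fin m → ℂ) :=
        LinearMap.pi (fun j => (pairingL p q (x' j)).comp Cl.subtype) with hF
      have hker : 1 ≤ finrank ℂ (LinearMap.ker F) := by
        have h1 := LinearMap.finrank_range_add_finrank_ker F
        have h2 : finrank ℂ (LinearMap.range F) ≤ m := by
          have := Submodule.finrank_le (LinearMap.range F)
          simpa [finrank_pi] using this
        have h3 : m + 1 ≤ finrank ℂ Cl := by simpa using hrank (Fin.last m)
        omega
      have hkerne : LinearMap.ker F ≠ ⊥ := by
        intro hbot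
        rw [hbot] at hker
        simp at hker
      obtain ⟨u, hu, hu0⟩ := Submodule.exists_mem_ne_zero_of_ne_bot hkerne
      set v : Fin (p+q) → ℂ := (u : Fin (p+q) → ℂ) with hv
      have hv0 : v ≠ 0 := fun h => hu0 (by ext; exact congrFun h _)
      have hvC : v ∈ Cl := u.2
      have hvorth : ∀ j : Fin m, pairing p q v (x' j) = 0 := by
        intro j
        have := congrFun (LinearMap.mem_ker.mp hu) j
        simpa [hF, pairingL] using this
      have hr : 0 < (pairing p q v v).re := hpos (Fin.last m) v hvC hv0
      set r : ℝ := (pairing p q v v).re with hrdef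
      set c : ℂ := ((1 / Real.sqrt r : ℝ) : ℂ) with hc
      set xm : Fin (p+q) → ℂ := c • v with hxm
      have hxmC : xm ∈ Cl := Cl.smul_mem c hvC
      have hxmnorm : pairing p q xm xm = 1 := by
        rw [hxm, pairing_smul_left, pairing_smul_right]
        rw [pairing_self_real p q v, ← hrdef, hc]
        rw [Complex.conj_ofReal]
        have : (1 / Real.sqrt r) * ((1 / Real.sqrt r) * r) = 1 := by
          rw [one_div, ← mul_assoc, ← mul_inv, Real.mul_self_sqrt hr.le]
          exact inv_mul_cancel₀ (ne_of_gt hr)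
        push_cast
        exact_mod_cast this
      have hxmorth : ∀ j : Fin m, pairing p q xm (x' j) = 0 := by
        intro j
        rw [hxm, pairing_smul_left, hvorth j, mul_zero]
      have hxmorth' : ∀ j : Fin m, pairing p q (x' j) xm = 0 := by
        intro j
        rw [← pairing_conj, hxmorth j, map_zero]
      refine ⟨Fin.snoc x' xm, ?_, ?_⟩
      · intro k
        induction k using Fin.lastCases with
        | last => rw [Fin.snoc_last]; exact hxmC
        | cast k => rw [Fin.snoc_castSucc]; exact hx'mem k
      · intro j k
        induction j using Fin.lastCases with
        | last =>
            induction k using Fin.lastCases with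
            | last => simp [Fin.snoc_last, hxmnorm]
            | cast k =>
                rw [Fin.snoc_last, Fin.snoc_castSucc]
                rw [if_neg (by simp [Fin.ext_iff]; omega)]
                exact hxmorth k
        | cast j =>
            induction k using Fin.lastCases with
            | last =>
                rw [Fin.snoc_castSucc, Fin.snoc_last]
                rw [if_neg (by simp [Fin.ext_iff]; omega)]
                exact hxmorth' j
            | cast k =>
                rw [Fin.snoc_castSucc, Fin.snoc_castSucc, hx'orth j k]
                by_cases h : j = k
                · simp [h]
                · rw [if_neg h, if_neg (by simp [Fin.ext_iff] at h ⊢; omega)]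

lemma pairing_sum_right (p q : ℕ) {ι : Type*} (s : Finset ι) (f : ι → Fin (p + q) → ℂ)
    (w : Fin (p + q) → ℂ) :
    pairing p q w (∑ i ∈ s, f i) = ∑ i ∈ s, pairing p q w (f i) := by
  classical
  induction s using Finset.induction with
  | empty => simp [pairing]
  | @insert a s h ih => rw [Finset.sum_insert h, Finset.sum_insert h, pairing_add_right, ih]

lemma trace_identity (p q m : ℕ) (A : Matrix (Fin (p+q)) (Fin (p+q)) ℂ)
    (x z : Fin m → Fin (p+q) → ℂ)
    (hx : ∀ j k, pairing p q (x j) (x k) = if j = k then 1 else 0)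
    (hz : ∀ j k, pairing p q (z j) (z k) = if j = k then 1 else 0)
    (hspan : ∀ j, z j ∈ Submodule.span ℂ (Set.range x)) :
    ∑ j, pairing p q (A.mulVec (z j)) (z j) = ∑ j, pairing p q (A.mulVec (x j)) (x j) := by
  classical
  have hex : ∀ j, ∃ c : Fin m → ℂ, ∑ k, c k • x k = z j := by
    intro j
    exact (mem_span_range_iff_exists_fun ℂ).mp (hspan j)
  choose c hc using hex
  set M : Matrix (Fin m) (Fin m) ℂ := Matrix.of (fun j k => c j k) with hM
  -- expansion of pairings of z's
  have hexpand : ∀ j l, pairing p q (z j) (z l) = ∑ k, c j k * (starRingEnd ℂ) (c l k) := by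
    intro j l
    rw [← hc j, ← hc l, pairing_sum_left]
    refine Finset.sum_congr rfl fun k _ => ?_
    rw [pairing_sum_right]
    rw [Finset.sum_eq_single k]
    · rw [pairing_smul_left, pairing_smul_right, hx k k, if_pos rfl]
      ring
    · intro b _ hb
      rw [pairing_smul_left, pairing_smul_right, hx k b, if_neg (fun h => hb h.symm)]
      ring
    · intro h
      exact absurd (Finset.mem_univ k) h
  have hMMH : M * M.conjTranspose = 1 := by
    ext j l
    rw [Matrix.mul_apply]
    simp only [hM, Matrix.conjTranspose_apply, Matrix.of_apply, Matrix.one_apply,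
      ← starRingEnd_apply]
    rw [← hexpand j l, hz j l]
  have hMHM : M.conjTranspose * M = 1 := mul_eq_one_comm.mp hMMH
  have hsumc : ∀ k l : Fin m, ∑ j, c j k * (starRingEnd ℂ) (c j l)
      = if l = k then 1 else 0 := by
    intro k l
    have := congrFun (congrFun hMHM l) k
    rw [Matrix.mul_apply] at this
    simp only [hM, Matrix.conjTranspose_apply, Matrix.of_apply, Matrix.one_apply,
      ← starRingEnd_apply] at this
    rw [← this]
    refine Finset.sum_congr rfl fun j _ => ?_
    ring
  -- main computation
  have hAz : ∀ j, A.mulVec (z j) = ∑ k, c j k • A.mulVec (x k) := by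
    intro j
    rw [← hc j]
    rw [show A.mulVec (∑ k, c j k • x k) = A.mulVecLin (∑ k, c j k • x k) from rfl]
    rw [map_sum]
    refine Finset.sum_congr rfl fun k _ => ?_
    rw [LinearMap.map_smul]
    rfl
  calc ∑ j, pairing p q (A.mulVec (z j)) (z j)
      = ∑ j, ∑ k, ∑ l, c j k * ((starRingEnd ℂ) (c j l) * pairing p q (A.mulVec (x k)) (x l)) := by
        refine Finset.sum_congr rfl fun j _ => ?_
        rw [hAz j, ← hc j, pairing_sum_left]
        refine Finset.sum_congr rfl fun k _ => ?_
        rw [pairing_smul_left, pairing_sum_right, Finset.mul_sum]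
        refine Finset.sum_congr rfl fun l _ => ?_
        rw [pairing_smul_right]
    _ = ∑ k, ∑ l, (∑ j, c j k * (starRingEnd ℂ) (c j l)) * pairing p q (A.mulVec (x k)) (x l) := by
        rw [Finset.sum_comm]
        refine Finset.sum_congr rfl fun k _ => ?_
        rw [Finset.sum_comm]
        refine Finset.sum_congr rfl fun l _ => ?_
        rw [Finset.sum_mul]
        refine Finset.sum_congr rfl fun j _ => ?_
        ring
    _ = ∑ k, pairing p q (A.mulVec (x k)) (x k) := by
        refine Finset.sum_congr rfl fun k _ => ?_
        rw [Finset.sum_eq_single k]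
        · rw [hsumc k k, if_pos rfl, one_mul]
        · intro l _ hl
          rw [hsumc k l, if_neg hl, zero_mul]
        · intro h
          exact absurd (Finset.mem_univ k) h

section spaces
variable (p q : ℕ)

/-- vectors vanishing on coordinates `i` with `i < p` and `a ≤ i` (and nothing else required). -/
noncomputable def killSpace (a : ℕ) : Submodule ℂ (Fin (p + q) → ℂ) :=
  LinearMap.ker (LinearMap.funLeft ℂ ℂ
    (Subtype.val : {i : Fin (p + q) // (i : ℕ) < p ∧ a ≤ (i : ℕ)} → Fin (p + q)))

/-- vectors supported on coordinates `i` with `i < p` and `a ≤ i`. -/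
noncomputable def bandSpace (a : ℕ) : Submodule ℂ (Fin (p + q) → ℂ) :=
  LinearMap.ker (LinearMap.funLeft ℂ ℂ
    (Subtype.val : {i : Fin (p + q) // ¬((i : ℕ) < p ∧ a ≤ (i : ℕ))} → Fin (p + q)))

lemma mem_killSpace (a : ℕ) (w : Fin (p + q) → ℂ) :
    w ∈ killSpace p q a ↔ ∀ i : Fin (p + q), (i : ℕ) < p → a ≤ (i : ℕ) → w i = 0 := by
  unfold killSpace
  rw [LinearMap.mem_ker]
  constructor
  · intro h i h1 h2
    exact congrFun h ⟨i, h1, h2⟩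
  · intro h
    funext j
    exact h j.1 j.2.1 j.2.2

lemma mem_bandSpace (a : ℕ) (w : Fin (p + q) → ℂ) :
    w ∈ bandSpace p q a ↔ ∀ i : Fin (p + q), ¬((i : ℕ) < p ∧ a ≤ (i : ℕ)) → w i = 0 := by
  unfold bandSpace
  rw [LinearMap.mem_ker]
  constructor
  · intro h i h1
    exact congrFun h ⟨i, h1⟩
  · intro h
    funext j
    exact h j.1 j.2

lemma card_band (a : ℕ) (ha : a ≤ p) :
    Fintype.card {i : Fin (p + q) // (i : ℕ) < p ∧ a ≤ (i : ℕ)} = p - a := by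
  rw [Fintype.card_subtype, ← Finset.card_range (p - a)]
  refine Finset.card_bij' (fun i _ => (i : ℕ) - a)
    (fun j hj => (⟨a + j, by rw [Finset.mem_range] at hj; omega⟩ : Fin (p + q))) ?_ ?_ ?_ ?_
  · intro i hi
    simp only [Finset.mem_filter, Finset.mem_univ, true_and] at hi
    simp only [Finset.mem_range]
    omega
  · intro j hj
    simp only [Finset.mem_range] at hj
    simp only [Finset.mem_filter, Finset.mem_univ, true_and]
    constructor
    · show a + j < p
      omega
    · show a ≤ a + j
      omega
  · intro i hi
    simp only [Finset.mem_filter, Finset.mem_univ, true_and] at hi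
    apply Fin.ext
    simp
    omega
  · intro j hj
    simp only [Finset.mem_range] at hj
    simp

lemma finrank_killSpace (a : ℕ) (ha : a ≤ p) :
    finrank ℂ (killSpace p q a) + (p - a) = p + q := by
  have h1 := LinearMap.finrank_range_add_finrank_ker (LinearMap.funLeft ℂ ℂ
    (Subtype.val : {i : Fin (p + q) // (i : ℕ) < p ∧ a ≤ (i : ℕ)} → Fin (p + q)))
  have h2 : LinearMap.range (LinearMap.funLeft ℂ ℂ
      (Subtype.val : {i : Fin (p + q) // (i : ℕ) < p ∧ a ≤ (i : ℕ)} → Fin (p + q))) = ⊤ :=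
    LinearMap.range_eq_top.mpr (LinearMap.funLeft_surjective_of_injective ℂ ℂ _ Subtype.val_injective)
  rw [h2, finrank_top] at h1
  rw [Module.finrank_fintype_fun_eq_card, Module.finrank_fintype_fun_eq_card,
    Fintype.card_fin, card_band p q a ha] at h1
  unfold killSpace
  omega

lemma finrank_bandSpace (a : ℕ) (ha : a ≤ p) :
    finrank ℂ (bandSpace p q a) = p - a := by
  have h1 := LinearMap.finrank_range_add_finrank_ker (LinearMap.funLeft ℂ ℂ
    (Subtype.val : {i : Fin (p + q) // ¬((i : ℕ) < p ∧ a ≤ (i : ℕ))} → Fin (p + q)))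
  have h2 : LinearMap.range (LinearMap.funLeft ℂ ℂ
      (Subtype.val : {i : Fin (p + q) // ¬((i : ℕ) < p ∧ a ≤ (i : ℕ))} → Fin (p + q))) = ⊤ :=
    LinearMap.range_eq_top.mpr (LinearMap.funLeft_surjective_of_injective ℂ ℂ _ Subtype.val_injective)
  rw [h2, finrank_top] at h1
  have h3 : Fintype.card {i : Fin (p + q) // ¬((i : ℕ) < p ∧ a ≤ (i : ℕ))}
      = (p + q) - (p - a) := by
    rw [Fintype.card_subtype_compl, card_band p q a ha, Fintype.card_fin]
  rw [Module.finrank_fintype_fun_eq_card, Module.finrank_fintype_fun_eq_card,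
    Fintype.card_fin, h3] at h1
  unfold bandSpace
  omega

lemma killSpace_monotone (a b : ℕ) (hab : a ≤ b) : killSpace p q a ≤ killSpace p q b := by
  intro w hw
  rw [mem_killSpace] at *
  intro i h1 h2
  exact hw i h1 (le_trans hab h2)

lemma bandSpace_monotone (a b : ℕ) (hab : a ≤ b) : bandSpace p q b ≤ bandSpace p q a := by
  intro w hw
  rw [mem_bandSpace] at *
  intro i h1
  refine hw i fun hc => h1 ⟨hc.1, le_trans hab hc.2⟩

end spaces

section diagre
variable (p q : ℕ) (lam : Fin p → ℝ) (mu : Fin q → ℝ)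

noncomputable def dReal : Fin (p + q) → ℝ := fun i =>
  if h : (i : ℕ) < p then lam ⟨p - 1 - (i : ℕ), by omega⟩
  else mu ⟨(i : ℕ) - p, by have := i.isLt; omega⟩

lemma diagEntries_eq (i : Fin (p + q)) :
    diagEntries p q lam mu i = ((dReal p q lam mu i : ℝ) : ℂ) := by
  unfold diagEntries dReal
  split <;> rfl

lemma re_pairing_diag (w : Fin (p + q) → ℂ) :
    (pairing p q ((Matrix.diagonal (diagEntries p q lam mu)) *ᵥ w) w).re
      = ∑ i : Fin (p + q), (if (i : ℕ) < p then dReal p q lam mu i * Complex.normSq (w i)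
          else -(dReal p q lam mu i * Complex.normSq (w i))) := by
  unfold pairing
  rw [Complex.re_sum]
  refine Finset.sum_congr rfl fun i _ => ?_
  rw [mulVec_diagonal, diagEntries_eq]
  have : ((dReal p q lam mu i : ℝ) : ℂ) * w i * (starRingEnd ℂ) (w i)
      = (((dReal p q lam mu i * Complex.normSq (w i) : ℝ)) : ℂ) := by
    rw [mul_assoc, Complex.mul_conj]
    push_cast
    ring
  split
  · rw [this, Complex.ofReal_re]
  · rw [this, ← Complex.ofReal_neg, Complex.ofReal_re]

lemma re_pairing_self (w : Fin (p + q) → ℂ) :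
    (pairing p q w w).re
      = ∑ i : Fin (p + q), (if (i : ℕ) < p then Complex.normSq (w i)
          else -(Complex.normSq (w i))) := by
  unfold pairing
  rw [Complex.re_sum]
  refine Finset.sum_congr rfl fun i _ => ?_
  have : w i * (starRingEnd ℂ) (w i) = ((Complex.normSq (w i) : ℝ) : ℂ) := Complex.mul_conj (w i)
  split
  · rw [this, Complex.ofReal_re]
  · rw [this, ← Complex.ofReal_neg, Complex.ofReal_re]

end diagre

section bounds
variable (p q : ℕ) (hp : 0 < p) (hq : 0 < q) (lam : Fin p → ℝ) (mu : Fin q → ℝ)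

lemma rayleigh_lower (hlam : Monotone lam) (hmu : Antitone mu)
    (hsep : mu ⟨0, hq⟩ < lam ⟨0, hp⟩) (r : Fin p) (w : Fin (p + q) → ℂ)
    (hw : w ∈ killSpace p q (p - (r : ℕ))) :
    lam r * (pairing p q w w).re
      ≤ (pairing p q ((Matrix.diagonal (diagEntries p q lam mu)) *ᵥ w) w).re := by
  rw [re_pairing_diag, re_pairing_self, Finset.mul_sum]
  refine Finset.sum_le_sum fun i _ => ?_
  rw [mem_killSpace] at hw
  by_cases hip : (i : ℕ) < p
  · rw [if_pos hip, if_pos hip]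
    by_cases hw0 : w i = 0
    · simp [hw0]
    · have hlt : (i : ℕ) < p - (r : ℕ) := by
        by_contra hc
        exact hw0 (hw i hip (by omega))
      have hd : dReal p q lam mu i = lam ⟨p - 1 - (i : ℕ), by omega⟩ := dif_pos hip
      have hle : lam r ≤ dReal p q lam mu i := by
        rw [hd]
        refine hlam ?_
        rw [Fin.le_def]
        have := r.isLt
        simp
        omega
      exact mul_le_mul_of_nonneg_right hle (Complex.normSq_nonneg _)
  · rw [if_neg hip, if_neg hip]
    have hd : dReal p q lam mu i = mu ⟨(i : ℕ) - p, by have := i.isLt; omega⟩ := dif_neg hip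
    have hle : dReal p q lam mu i ≤ lam r := by
      rw [hd]
      have h1 : mu ⟨(i : ℕ) - p, by have := i.isLt; omega⟩ ≤ mu ⟨0, hq⟩ :=
        hmu (by rw [Fin.le_def]; simp)
      have h2 : lam ⟨0, hp⟩ ≤ lam r := hlam (by rw [Fin.le_def]; simp)
      linarith
    have := mul_le_mul_of_nonneg_right hle (Complex.normSq_nonneg (w i))
    linarith

lemma rayleigh_upper (hlam : Monotone lam) (r : Fin p) (w : Fin (p + q) → ℂ)
    (hw : w ∈ bandSpace p q (p - 1 - (r : ℕ))) :
    (pairing p q ((Matrix.diagonal (diagEntries p q lam mu)) *ᵥ w) w).re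
      ≤ lam r * (pairing p q w w).re := by
  rw [re_pairing_diag, re_pairing_self, Finset.mul_sum]
  refine Finset.sum_le_sum fun i _ => ?_
  rw [mem_bandSpace] at hw
  by_cases hip : (i : ℕ) < p
  · rw [if_pos hip, if_pos hip]
    by_cases hw0 : w i = 0
    · simp [hw0]
    · have hge : p - 1 - (r : ℕ) ≤ (i : ℕ) := by
        by_contra hc
        exact hw0 (hw i (fun hcc => hc hcc.2))
      have hd : dReal p q lam mu i = lam ⟨p - 1 - (i : ℕ), by omega⟩ := dif_pos hip
      have hle : dReal p q lam mu i ≤ lam r := by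
        rw [hd]
        refine hlam ?_
        rw [Fin.le_def]
        have := r.isLt
        simp
        omega
      exact mul_le_mul_of_nonneg_right hle (Complex.normSq_nonneg _)
  · have hw0 : w i = 0 := hw i (fun hcc => hip hcc.1)
    rw [if_neg hip, if_neg hip]
    simp [hw0]

lemma bandSpace_pos (a : ℕ) (w : Fin (p + q) → ℂ)
    (hw : w ∈ bandSpace p q a) (hw0 : w ≠ 0) : 0 < (pairing p q w w).re := by
  rw [re_pairing_self]
  rw [mem_bandSpace] at hw
  have hex : ∃ i, w i ≠ 0 := by
    by_contra hc
    push_neg at hc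
    exact hw0 (funext hc)
  obtain ⟨i0, hi0⟩ := hex
  have hi0p : (i0 : ℕ) < p := by
    by_contra hc
    exact hi0 (hw i0 (fun hcc => hc hcc.1))
  refine Finset.sum_pos' (fun i _ => ?_) ⟨i0, Finset.mem_univ _, ?_⟩
  · by_cases hip : (i : ℕ) < p
    · rw [if_pos hip]; exact Complex.normSq_nonneg _
    · rw [if_neg hip, hw i (fun hcc => hip hcc.1)]
      simp
  · rw [if_pos hi0p]
    exact Complex.normSq_pos.mpr hi0
end bounds


section auxmisc
open Module

lemma pairing_zero_left (p q : ℕ) (w : Fin (p + q) → ℂ) : pairing p q 0 w = 0 := by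
  unfold pairing
  simp

lemma strictMono_gap {m p : ℕ} (idx : Fin m → Fin p) (hidx : StrictMono idx) :
    ∀ (d : ℕ) (j k : Fin m), (k : ℕ) = (j : ℕ) + d → (idx j : ℕ) + d ≤ (idx k : ℕ) := by
  intro d
  induction d with
  | zero =>
      intro j k h
      have : j = k := Fin.ext (by omega)
      subst this
      omega
  | succ d ihd =>
      intro j k h
      have hk' : (j : ℕ) + d < m := by have := k.isLt; omega
      have h1 := ihd j ⟨(j : ℕ) + d, hk'⟩ rfl
      have h2 : (⟨(j : ℕ) + d, hk'⟩ : Fin m) < k := by rw [Fin.lt_def]; simp; omega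
      have h3 := hidx h2
      rw [Fin.lt_def] at h3
      omega

end auxmisc

/-- Wielandt minimax analogue: `Σ_j λ_{i_j}` is the min over flags of
the max over subordinate systems of `Σ_j x_j† A x_j`; precisely, (i) for every flag
some subordinate system has `Σ_j x_j† A x_j ≥ Σ_j λ_{i_j}`, and (ii) some flag has
`Σ_j x_j† A x_j ≤ Σ_j λ_{i_j}` for every subordinate system. -/
theorem wielandt_minimax
    (p q : ℕ) (hp : 0 < p) (hq : 0 < q)
    (A : Matrix (Fin (p + q)) (Fin (p + q)) ℂ)
    (lam : Fin p → ℝ) (mu : Fin q → ℝ)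
    (hA : IsAdmissible p q hp hq A lam mu)
    (m : ℕ) (hm : 0 < m) (idx : Fin m → Fin p) (hidx : StrictMono idx) :
    (∀ V : Fin m → Submodule ℂ (Fin (p + q) → ℂ), IsFlag p q m hm idx V →
        ∃ x : Fin m → Fin (p + q) → ℂ, IsSubordinate p q m V x ∧
          ∑ j : Fin m, lam (idx j) ≤
            ∑ j : Fin m, (pairing p q (A.mulVec (x j)) (x j)).re) ∧
    (∃ V : Fin m → Submodule ℂ (Fin (p + q) → ℂ), IsFlag p q m hm idx V ∧
        ∀ x : Fin m → Fin (p + q) → ℂ, IsSubordinate p q m V x →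
          ∑ j : Fin m, (pairing p q (A.mulVec (x j)) (x j)).re ≤
            ∑ j : Fin m, lam (idx j)) := by
  classical
  obtain ⟨hpseudo, hlam, hmu, hsep, U, hU, hUJ, hAeq⟩ := hA
  have hUdet : IsUnit U.det := (Matrix.isUnit_iff_isUnit_det U).mp hU
  have hUJ' : U.conjTranspose * Jmat p q * U = Jmat p q :=
    conjT_J_U p q U (Jmat p q) (Jmat_mul_Jmat p q) hU hUJ
  have hInv : ∀ z w, pairing p q (U *ᵥ z) (U *ᵥ w) = pairing p q z w :=
    pairing_U_invariant p q U hUJ'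
  have hUinvU : U⁻¹ * U = 1 := Matrix.nonsing_inv_mul U hUdet
  have hUUinv : U * U⁻¹ = 1 := Matrix.mul_nonsing_inv U hUdet
  have hAU : ∀ w, A *ᵥ (U *ᵥ w)
      = U *ᵥ ((Matrix.diagonal (diagEntries p q lam mu)) *ᵥ w) := by
    intro w
    rw [Matrix.mulVec_mulVec, Matrix.mulVec_mulVec, hAeq]
    have hmm : U * Matrix.diagonal (diagEntries p q lam mu) * U⁻¹ * U
        = U * Matrix.diagonal (diagEntries p q lam mu) := by
      calc U * Matrix.diagonal (diagEntries p q lam mu) * U⁻¹ * U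
          = U * Matrix.diagonal (diagEntries p q lam mu) * (U⁻¹ * U) := by
            rw [Matrix.mul_assoc]
      _ = U * Matrix.diagonal (diagEntries p q lam mu) := by rw [hUinvU, Matrix.mul_one]
    rw [hmm]
  have hgap : ∀ j k : Fin m, j ≤ k →
      (idx j : ℕ) + ((k : ℕ) - (j : ℕ)) ≤ (idx k : ℕ) := by
    intro j k hjk
    rw [Fin.le_def] at hjk
    exact strictMono_gap idx hidx ((k : ℕ) - (j : ℕ)) j k (by omega)
  set Ueq : (Fin (p+q) → ℂ) ≃ₗ[ℂ] (Fin (p+q) → ℂ) :=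
    LinearEquiv.ofLinear (Matrix.mulVecLin U) (Matrix.mulVecLin U⁻¹)
      (by rw [← Matrix.mulVecLin_mul, hUUinv, Matrix.mulVecLin_one])
      (by rw [← Matrix.mulVecLin_mul, hUinvU, Matrix.mulVecLin_one]) with hUeq
  have hfinrank_map : ∀ X : Submodule ℂ (Fin (p+q) → ℂ),
      finrank ℂ (X.map (Matrix.mulVecLin U)) = finrank ℂ X := by
    intro X
    exact LinearEquiv.finrank_map_eq Ueq X
  have hN : finrank ℂ (Fin (p+q) → ℂ) = p + q := by
    rw [Module.finrank_fintype_fun_eq_card, Fintype.card_fin]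
  have hzero_of : ∀ w : Fin (p+q) → ℂ, U *ᵥ w = 0 → w = 0 := by
    intro w hw
    have := congrArg (fun v => U⁻¹ *ᵥ v) hw
    simpa [Matrix.mulVec_mulVec, hUinvU] using this
  constructor
  · -- part (i)
    intro V hFlag
    obtain ⟨hlt, hrank, hposflag⟩ := hFlag
    have hVmono : Monotone V := by
      intro j k hjk
      rcases eq_or_lt_of_le hjk with h | h
      · rw [h]
      · exact le_of_lt (hlt j k h)
    have hlast : m - 1 < m := by omega
    have hVle : ∀ j, V j ≤ V ⟨m - 1, hlast⟩ := by
      intro j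
      refine hVmono ?_
      rw [Fin.le_def]
      have := j.isLt
      simp
      omega
    set Wsub : Fin m → Submodule ℂ (Fin (p+q) → ℂ) :=
      fun j => (killSpace p q (p - (idx j : ℕ))).map (Matrix.mulVecLin U) with hWsub
    have hWsubj : ∀ j, Wsub j = (killSpace p q (p - (idx j : ℕ))).map (Matrix.mulVecLin U) :=
      fun _ => rfl
    have hWrank : ∀ j, finrank ℂ (Wsub j) + (idx j : ℕ) = p + q := by
      intro j
      rw [hWsubj, hfinrank_map]
      have h1 := finrank_killSpace p q (p - (idx j : ℕ)) (by omega)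
      have h2 := (idx j).isLt
      omega
    have hWanti : Antitone Wsub := by
      intro a b hab
      rw [hWsubj, hWsubj]
      refine Submodule.map_mono (killSpace_monotone p q _ _ ?_)
      have h3 := hidx.monotone hab
      rw [Fin.le_def] at h3
      omega
    obtain ⟨S, hSrank, hSV, hSW⟩ := schubert_lemma m (Fin (p+q) → ℂ) V Wsub hVmono hWanti (by
      intro j k hjk
      have h1 := hrank k
      have h2 := hWrank j
      have h3 := hgap j k hjk
      rw [Fin.le_def] at hjk
      omega)
    have hSle : S ≤ V ⟨m - 1, hlast⟩ := by
      have h1 := hSV ⟨m - 1, hlast⟩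
      have h5 : ((⟨m - 1, hlast⟩ : Fin m) : ℕ) = m - 1 := rfl
      have h4 : finrank ℂ ↥S ≤ finrank ℂ ↥(S ⊓ V ⟨m - 1, hlast⟩) := by omega
      have h3 : S ⊓ V ⟨m - 1, hlast⟩ = S :=
        Submodule.eq_of_le_of_finrank_le inf_le_left h4
      rw [← h3]
      exact inf_le_right
    obtain ⟨x, hxmem, hxorth⟩ := gram_schmidt p q m (fun j => S ⊓ V j)
      (fun a b hab => inf_le_inf_left S (hVmono hab))
      (fun k => hSV k)
      (fun k v hv hv0 => hposflag v (hVle k hv.2) hv0)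
    obtain ⟨z', hzmem', hzorth'⟩ := gram_schmidt p q m
      (fun j => S ⊓ Wsub ⟨m - 1 - (j : ℕ), by omega⟩)
      (by
        intro a b hab
        refine inf_le_inf_left S (hWanti ?_)
        rw [Fin.le_def] at hab ⊢
        simp
        omega)
      (by
        intro k
        have hkidx : m - 1 - (k : ℕ) < m := by omega
        have h1 := hSW ⟨m - 1 - (k : ℕ), hkidx⟩
        have h2 : ((⟨m - 1 - (k : ℕ), hkidx⟩ : Fin m) : ℕ) = m - 1 - (k : ℕ) := rfl
        rw [h2] at h1
        have h3 := k.isLt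
        show (k : ℕ) + 1 ≤ finrank ℂ ↥(S ⊓ Wsub ⟨m - 1 - (k : ℕ), hkidx⟩)
        omega)
      (fun k v hv hv0 => hposflag v (hSle hv.1) hv0)
    set z : Fin m → (Fin (p+q) → ℂ) := fun j => z' ⟨m - 1 - (j : ℕ), by omega⟩ with hzdef
    have hzj : ∀ j, z j = z' ⟨m - 1 - (j : ℕ), by omega⟩ := fun _ => rfl
    have hzS : ∀ j, z j ∈ S ⊓ Wsub j := by
      intro j
      have h := hzmem' ⟨m - 1 - (j : ℕ), by omega⟩
      have e : (⟨m - 1 - (m - 1 - (j : ℕ)), by omega⟩ : Fin m) = j := by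
        apply Fin.ext
        have := j.isLt
        simp
        omega
      rw [hzj]
      convert h using 3
      rw [e]
    have hzorth : ∀ j k, pairing p q (z j) (z k) = if j = k then 1 else 0 := by
      intro j k
      rw [hzj, hzj, hzorth']
      by_cases h : j = k
      · subst h
        simp
      · rw [if_neg, if_neg h]
        intro hc
        rw [Fin.mk.injEq] at hc
        have h1 := j.isLt
        have h2 := k.isLt
        exact h (Fin.ext (by omega))
    have hlin : LinearIndependent ℂ x := by
      rw [Fintype.linearIndependent_iff]
      intro g hg i
      have h1 := congrArg (fun v => pairing p q v (x i)) hg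
      rw [pairing_sum_left, pairing_zero_left] at h1
      rw [Finset.sum_eq_single i] at h1
      · rw [pairing_smul_left, hxorth i i, if_pos rfl, mul_one] at h1
        exact h1
      · intro b _ hb
        rw [pairing_smul_left, hxorth b i, if_neg hb, mul_zero]
      · intro h
        exact absurd (Finset.mem_univ i) h
    have hspan : Submodule.span ℂ (Set.range x) = S := by
      refine Submodule.eq_of_le_of_finrank_le
        (Submodule.span_le.mpr ?_) ?_
      · rintro v ⟨i, rfl⟩
        exact (hxmem i).1
      · rw [hSrank, finrank_span_eq_card hlin, Fintype.card_fin]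
    have htr := trace_identity p q m A x z hxorth hzorth
      (fun j => by rw [hspan]; exact (hzS j).1)
    refine ⟨x, ⟨fun j => (hxmem j).2, hxorth⟩, ?_⟩
    have hperterm : ∀ j : Fin m,
        lam (idx j) ≤ (pairing p q (A.mulVec (z j)) (z j)).re := by
      intro j
      obtain ⟨w, hwmem, hweq⟩ := Submodule.mem_map.mp (hzS j).2
      rw [Matrix.mulVecLin_apply] at hweq
      have hww : pairing p q w w = 1 := by
        rw [← hInv w w, hweq, hzorth j j, if_pos rfl]
      have hb := rayleigh_lower p q hp hq lam mu hlam hmu hsep (idx j) w hwmem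
      rw [hww] at hb
      simp only [Complex.one_re, mul_one] at hb
      calc lam (idx j)
          ≤ (pairing p q ((Matrix.diagonal (diagEntries p q lam mu)) *ᵥ w) w).re := hb
      _ = (pairing p q (U *ᵥ ((Matrix.diagonal (diagEntries p q lam mu)) *ᵥ w)) (U *ᵥ w)).re := by
          rw [hInv]
      _ = (pairing p q (A.mulVec (z j)) (z j)).re := by rw [← hAU, hweq]
    calc ∑ j : Fin m, lam (idx j)
        ≤ ∑ j : Fin m, (pairing p q (A.mulVec (z j)) (z j)).re :=
          Finset.sum_le_sum fun j _ => hperterm j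
    _ = (∑ j : Fin m, pairing p q (A.mulVec (z j)) (z j)).re := (Complex.re_sum _ _).symm
    _ = (∑ j : Fin m, pairing p q (A.mulVec (x j)) (x j)).re := by rw [htr]
    _ = ∑ j : Fin m, (pairing p q (A.mulVec (x j)) (x j)).re := Complex.re_sum _ _
  · -- part (ii)
    set V : Fin m → Submodule ℂ (Fin (p+q) → ℂ) :=
      fun j => (bandSpace p q (p - 1 - (idx j : ℕ))).map (Matrix.mulVecLin U) with hVdef
    have hVj : ∀ j, V j = (bandSpace p q (p - 1 - (idx j : ℕ))).map (Matrix.mulVecLin U) :=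
      fun _ => rfl
    have hVrank : ∀ j, finrank ℂ (V j) = (idx j : ℕ) + 1 := by
      intro j
      rw [hVj, hfinrank_map]
      rw [finrank_bandSpace p q _ (by omega)]
      have := (idx j).isLt
      omega
    refine ⟨V, ⟨?_, hVrank, ?_⟩, ?_⟩
    · -- strictly increasing
      intro j k hjk
      have hle : V j ≤ V k := by
        rw [hVj, hVj]
        refine Submodule.map_mono (bandSpace_monotone p q _ _ ?_)
        have h3 := hidx.monotone (le_of_lt hjk)
        rw [Fin.le_def] at h3
        have := (idx k).isLt
        omega
      refine lt_of_le_of_ne hle ?_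
      intro hc
      have h1 := hVrank j
      have h2 := hVrank k
      rw [hc] at h1
      have h4 := hidx hjk
      rw [Fin.lt_def] at h4
      omega
    · -- positivity
      intro v hv hv0
      obtain ⟨w, hwmem, hweq⟩ := Submodule.mem_map.mp hv
      rw [Matrix.mulVecLin_apply] at hweq
      have hw0 : w ≠ 0 := by
        intro hc
        rw [hc] at hweq
        rw [Matrix.mulVec_zero] at hweq
        exact hv0 hweq.symm
      have := bandSpace_pos p q _ w hwmem hw0
      rw [← hweq, hInv]
      exact this
    · -- upper bound for subordinate systems
      intro x hx
      obtain ⟨hxmem, hxorth⟩ := hx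
      refine Finset.sum_le_sum fun j _ => ?_
      obtain ⟨w, hwmem, hweq⟩ := Submodule.mem_map.mp (hxmem j)
      rw [Matrix.mulVecLin_apply] at hweq
      have hww : pairing p q w w = 1 := by
        rw [← hInv w w, hweq, hxorth j j, if_pos rfl]
      have hb := rayleigh_upper p q lam mu hlam (idx j) w hwmem
      rw [hww] at hb
      simp only [Complex.one_re, mul_one] at hb
      calc (pairing p q (A.mulVec (x j)) (x j)).re
          = (pairing p q (U *ᵥ ((Matrix.diagonal (diagEntries p q lam mu)) *ᵥ w)) (U *ᵥ w)).re := by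
            rw [← hAU, hweq]
      _ = (pairing p q ((Matrix.diagonal (diagEntries p q lam mu)) *ᵥ w) w).re := by rw [hInv]
      _ ≤ lam (idx j) := hb
end
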